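/- arXiv:1504.06501 — 4 statements merged into one kernel-verified Lean document; each statement's English description precedes it below -/
import Mathlib

section
/- For any buffer size M and any two finite input sequences I and I' over a linear order, if I' is a subsequence of I, then OPT_M(I') ≤ OPT_M(I). -/
namespace RunGen

variable {α : Type*} [LinearOrder α]

/-- A run: a contiguous monotone (nondecreasing or nonincreasing) block. -/
def IsRun (l : List α) : Prop := l.Chain' (· ≤ ·) ∨ l.Chain' (· ≥ ·)

/-- `S` can be partitioned into `n` contiguous runs. -/
def RunsInto (S : List α) (n : ℕ) : Prop :=
  ∃ P : List (List α), P.flatten = S ∧ P.length = n ∧ ∀ r ∈ P, IsRun r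

/-- `R S` is the minimum number of contiguous runs into which `S` can be partitioned. -/
noncomputable def R (S : List α) : ℕ := sInf {n | RunsInto S n}

/-- `S` is an `M`-feasible output of the input `I`: `S` is a rearrangement of `I` in which
the element written at (0-indexed) step `t` lies among the first `M + t` input elements
(a size-`M` buffer refilled after each write). -/
def IsFeasibleOutput (M : ℕ) (I S : List α) : Prop :=
  S.length = I.length ∧
    ∃ σ : Fin I.length ≃ Fin I.length,
      ∀ t : Fin I.length, S[(t : ℕ)]? = I[(σ t : ℕ)]? ∧ (σ t : ℕ) < M + (t : ℕ)

/-- `OPT M I` is the minimum of `R S` over all `M`-feasible outputs `S` of `I`. -/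
noncomputable def OPT (M : ℕ) (I : List α) : ℕ :=
  sInf {n | ∃ S : List α, IsFeasibleOutput M I S ∧ RunsInto S n}

/-- The smallest buffered element that can continue an increasing run whose last written
element is `last?` (`none` at the start of a run, where the smallest element is chosen). -/
def nextUp (last? : Option α) (B : List α) : Option α :=
  match last? with
  | none => B.min?
  | some l => (B.filter fun x => decide (l ≤ x)).min?

/-- The largest buffered element that can continue a decreasing run. -/
def nextDown (last? : Option α) (B : List α) : Option α :=
  match last? with
  | none => B.max?
  | some l => (B.filter fun x => decide (x ≤ l)).max?

/-- Writing the maximal increasing run from buffer `B` (in arrival order) and remaining input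
`J` (`fuel` bounds the number of steps; `B.length + J.length` always suffices).  After each
write the next input element, if any, is ingested.  Returns
`(run written, final buffer in arrival order, final remaining input)`. -/
def incAux : ℕ → Option α → List α → List α → List α × List α × List α
  | 0, _, B, J => ([], B, J)
  | fuel + 1, last?, B, J =>
    match nextUp last? B with
    | none => ([], B, J)
    | some x =>
      let res := incAux fuel (some x) (B.erase x ++ J.take 1) (J.drop 1)
      (x :: res.1, res.2.1, res.2.2)

/-- Writing the maximal decreasing run; see `incAux`. -/
def decAux : ℕ → Option α → List α → List α → List α × List α × List α
  | 0, _, B, J => ([], B, J)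
  | fuel + 1, last?, B, J =>
    match nextDown last? B with
    | none => ([], B, J)
    | some x =>
      let res := decAux fuel (some x) (B.erase x ++ J.take 1) (J.drop 1)
      (x :: res.1, res.2.1, res.2.2)

/-- The maximal increasing run from the state `(B, J)`. -/
def maxIncRun (B J : List α) : List α := (incAux (B.length + J.length) none B J).1

/-- The state (buffer in arrival order, remaining input) after writing the maximal
increasing run from `(B, J)`. -/
def incState (B J : List α) : List α × List α := (incAux (B.length + J.length) none B J).2

/-- The maximal decreasing run from the state `(B, J)`. -/
def maxDecRun (B J : List α) : List α := (decAux (B.length + J.length) none B J).1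

/-- The state after writing the maximal decreasing run from `(B, J)`. -/
def decState (B J : List α) : List α × List α := (decAux (B.length + J.length) none B J).2

/-- The maximal run in direction `d` (`true` = increasing, `false` = decreasing). -/
def dirRun (d : Bool) (B J : List α) : List α := if d then maxIncRun B J else maxDecRun B J

/-- The state after writing the maximal run in direction `d`. -/
def dirState (d : Bool) (B J : List α) : List α × List α :=
  if d then incState B J else decState B J

/-- `Writes B J S B' J'`: from the state with buffer `B` (in arrival order) and remaining
input `J`, an algorithm can write exactly the sequence `S` (each written element is removed
from the buffer, and the next input element, if any, is then ingested), ending at the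
state `(B', J')`. -/
inductive Writes : List α → List α → List α → List α → List α → Prop
  | nil (B J : List α) : Writes B J [] B J
  | step (B J : List α) (i : ℕ) (S B' J' : List α) (h : i < B.length)
      (hrest : Writes (B.eraseIdx i ++ J.take 1) (J.drop 1) S B' J') :
      Writes B J (B[i]'h :: S) B' J'

/-- `ProperWrites B J P B' J'`: from state `(B, J)`, a proper algorithm (one that always
writes maximal runs) can write the list of runs `P`, ending at state `(B', J')`. -/
inductive ProperWrites : List α → List α → List (List α) → List α → List α → Prop
  | nil (B J : List α) : ProperWrites B J [] B J
  | step (d : Bool) (B J : List α) (P : List (List α)) (B' J' : List α) (hB : B ≠ [])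
      (h : ProperWrites (dirState d B J).1 (dirState d B J).2 P B' J') :
      ProperWrites B J (dirRun d B J :: P) B' J'

/-- An increasing run writable from the state `(B, J)`, the last written element being
`last?`: each written element is currently buffered and is `≥` the previously written
element, and after each write the next input element (if any) is ingested. -/
inductive IncRunFrom : Option α → List α → List α → List α → Prop
  | nil (last? : Option α) (B J : List α) : IncRunFrom last? B J []
  | cons (last? : Option α) (B J : List α) (x : α) (r : List α) (hx : x ∈ B)
      (hle : ∀ l ∈ last?, l ≤ x)
      (h : IncRunFrom (some x) (B.erase x ++ J.take 1) (J.drop 1) r) :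
      IncRunFrom last? B J (x :: r)

/-- A decreasing run writable from the state `(B, J)`; see `IncRunFrom`. -/
inductive DecRunFrom : Option α → List α → List α → List α → Prop
  | nil (last? : Option α) (B J : List α) : DecRunFrom last? B J []
  | cons (last? : Option α) (B J : List α) (x : α) (r : List α) (hx : x ∈ B)
      (hge : ∀ l ∈ last?, x ≤ l)
      (h : DecRunFrom (some x) (B.erase x ++ J.take 1) (J.drop 1) r) :
      DecRunFrom last? B J (x :: r)

/-- The optimal number of runs over all ways of writing out everything from state `(B, J)`. -/
noncomputable def OPTFrom (B J : List α) : ℕ :=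
  sInf {n | ∃ S : List α, Writes B J S [] [] ∧ RunsInto S n}

/-- Running a deterministic online algorithm `A`: at each step, given the current buffer
(in arrival order) and the output written so far, `A` chooses (the index of) the buffered
element to write next; the next input element is then ingested. -/
def runAlg (A : List α → List α → ℕ) : ℕ → List α → List α → List α → List α
  | 0, _, _, _ => []
  | fuel + 1, W, B, J =>
    match B with
    | [] => []
    | b :: Bt =>
      let i := A (b :: Bt) W % (b :: Bt).length
      let x := (b :: Bt).getD i b
      x :: runAlg A fuel (W ++ [x]) ((b :: Bt).eraseIdx i ++ J.take 1) (J.drop 1)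

/-- The output of the deterministic online algorithm `A` run with buffer size `M` on
input `I`. -/
def onlineOutput (A : List α → List α → ℕ) (M : ℕ) (I : List α) : List α :=
  runAlg A I.length [] (I.take M) (I.drop M)

/-- Running a deterministic algorithm with `v`-lookahead: its choice of which buffered
element to write may additionally depend on the next `v` not-yet-read input elements. -/
def runAlgVis (A : List α → List α → List α → ℕ) (v : ℕ) :
    ℕ → List α → List α → List α → List α
  | 0, _, _, _ => []
  | fuel + 1, W, B, J =>
    match B with
    | [] => []
    | b :: Bt =>
      let i := A (b :: Bt) W (J.take v) % (b :: Bt).length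
      let x := (b :: Bt).getD i b
      x :: runAlgVis A v fuel (W ++ [x]) ((b :: Bt).eraseIdx i ++ J.take 1) (J.drop 1)

/-- The output of the deterministic algorithm `A` with buffer size `M` and `v`-lookahead. -/
def visOutput (A : List α → List α → List α → ℕ) (v M : ℕ) (I : List α) : List α :=
  runAlgVis A v I.length [] (I.take M) (I.drop M)

/-- Alternating up-down replacement selection from a state (starting with an increasing
run when `d = true`), writing maximal runs of strictly alternating directions. -/
def altAux : ℕ → Bool → List α → List α → List α
  | 0, _, _, _ => []
  | fuel + 1, d, B, J =>
    if B = [] then []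
    else dirRun d B J ++ altAux fuel (!d) (dirState d B J).1 (dirState d B J).2

/-- The output of alternating up-down replacement selection with buffer size `M` on `I`. -/
def altOutput (M : ℕ) (I : List α) : List α :=
  altAux (I.length + 1) true (I.take M) (I.drop M)

/-- `GreedyRuns B J P`: `P` is the list of runs written by (some tie-breaking of) the
greedy algorithm from state `(B, J)`: at each decision point it writes the longer of the
two possible maximal runs (ties broken arbitrarily). -/
inductive GreedyRuns : List α → List α → List (List α) → Prop
  | nil : GreedyRuns [] [] []
  | step (d : Bool) (B J : List α) (P : List (List α)) (hB : B ≠ [])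
      (hlen : (dirRun (!d) B J).length ≤ (dirRun d B J).length)
      (h : GreedyRuns (dirState d B J).1 (dirState d B J).2 P) :
      GreedyRuns B J (dirRun d B J :: P)

/-- `PTASOut k B J S`: `S` is a possible output of the phase-based offline approximation
algorithm with parameter `k` from state `(B, J)`: while more than `k` runs remain, it
selects a sequence of `k` consecutive maximal runs writing the longest total number of
elements and writes them, followed by one additional maximal run; once everything can be
written in at most `k` (maximal) runs, it finishes using the fewest possible runs. -/
inductive PTASOut (k : ℕ) : List α → List α → List α → Prop
  | final (B J : List α) (P : List (List α)) (hP : ProperWrites B J P [] [])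
      (hk : P.length ≤ k)
      (hmin : ∀ Q : List (List α), ProperWrites B J Q [] [] → P.length ≤ Q.length) :
      PTASOut k B J P.flatten
  | phase (B J : List α) (P : List (List α)) (B' J' : List α) (r : List α)
      (B'' J'' : List α) (S : List α)
      (hnf : ¬∃ Q : List (List α), ProperWrites B J Q [] [] ∧ Q.length ≤ k)
      (hP : ProperWrites B J P B' J') (hPk : P.length = k)
      (hmax : ∀ (Q : List (List α)) (BQ JQ : List α),
        ProperWrites B J Q BQ JQ → Q.length = k → Q.flatten.length ≤ P.flatten.length)
      (hr : ProperWrites B' J' [r] B'' J'') (hS : PTASOut k B'' J'' S) :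
      PTASOut k B J (P.flatten ++ (r ++ S))

/-- An input is `c`-nearly-sorted (for buffer size `M`) if some proper optimal output
consists entirely of runs of length at least `c * M`. -/
def NearlySorted (c M : ℕ) (I : List α) : Prop :=
  ∃ P : List (List α), ProperWrites (I.take M) (I.drop M) P [] [] ∧
    R P.flatten = OPT M I ∧ ∀ r ∈ P, c * M ≤ r.length

end RunGen

namespace RunGen

variable {α : Type*} [LinearOrder α]

set_option linter.unusedSectionVars false

theorem isRun_sublist {l l' : List α} (hs : List.Sublist l' l) (hr : IsRun l) : IsRun l' := by
  rcases hr with h1 | h1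
  · exact Or.inl (List.isChain_iff_pairwise.mpr ((List.isChain_iff_pairwise.mp h1).sublist hs))
  · exact Or.inr (List.isChain_iff_pairwise.mpr ((List.isChain_iff_pairwise.mp h1).sublist hs))

theorem sub_partition : ∀ (P : List (List α)) (S' : List α), List.Sublist S' P.flatten →
    (∀ r ∈ P, IsRun r) →
    ∃ P' : List (List α), P'.flatten = S' ∧ P'.length = P.length ∧ ∀ r ∈ P', IsRun r := by
  intro P
  induction P with
  | nil =>
    intro S' hs _
    simp only [List.flatten_nil, List.sublist_nil] at hs
    exact ⟨[], by simp [hs], rfl, by simp⟩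
  | cons r P ih =>
    intro S' hs hr
    rw [List.flatten_cons, List.sublist_append_iff] at hs
    obtain ⟨l₁, l₂, rfl, h₁, h₂⟩ := hs
    obtain ⟨P', hf, hl, hrr⟩ := ih l₂ h₂ (fun q hq => hr q (List.mem_cons_of_mem _ hq))
    refine ⟨l₁ :: P', by simp [hf], by simp [hl], ?_⟩
    intro q hq
    rcases List.mem_cons.mp hq with rfl | hq
    · exact isRun_sublist h₁ (hr r (List.mem_cons_self))
    · exact hrr q hq

theorem runsInto_sublist {S S' : List α} (hs : List.Sublist S' S) {n : ℕ} (hr : RunsInto S n) :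
    RunsInto S' n := by
  obtain ⟨P, hflat, hlen, hruns⟩ := hr
  obtain ⟨P', h1, h2, h3⟩ := sub_partition P S' (hflat ▸ hs) hruns
  exact ⟨P', h1, h2.trans hlen, h3⟩

theorem runsInto_self (L : List α) : RunsInto L L.length := by
  refine ⟨L.map (fun a => [a]), ?_, by simp, ?_⟩
  · induction L with
    | nil => simp
    | cons a L ih => simp [ih]
  · intro r hr
    simp only [List.mem_map] at hr
    obtain ⟨a, _, rfl⟩ := hr
    exact Or.inl (List.isChain_singleton a)

theorem feasible_nil (M : ℕ) : IsFeasibleOutput M ([] : List α) [] :=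
  ⟨rfl, Equiv.refl _, fun t => t.elim0⟩

theorem feasible_self (M : ℕ) (hM : 1 ≤ M) (I : List α) : IsFeasibleOutput M I I :=
  ⟨rfl, Equiv.refl _, fun t => ⟨rfl, by simp; omega⟩⟩

theorem key_step (M : ℕ) (I I' S : List α) (h : List.Sublist I' I) (hI' : I' ≠ [])
    (hfeas : IsFeasibleOutput M I S) :
    ∃ S' : List α, IsFeasibleOutput M I' S' ∧ List.Sublist S' S := by
  classical
  obtain ⟨hlenS, σ, hσ⟩ := hfeas
  obtain ⟨f, hf⟩ := List.sublist_iff_exists_fin_orderEmbedding_get_eq.mp h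
  haveI : Nonempty (Fin I'.length) := ⟨⟨0, List.length_pos_iff.mpr hI'⟩⟩
  -- get form of hσ
  have hget : ∀ t : Fin I.length, S.get (Fin.cast hlenS.symm t) = I.get (σ t) := by
    intro t
    have h1 := (hσ t).1
    rw [List.getElem?_eq_getElem (by rw [hlenS]; exact t.isLt),
      List.getElem?_eq_getElem ((σ t).isLt)] at h1
    simpa [List.get_eq_getElem] using h1
  -- kept times
  set K : Finset (Fin I.length) :=
    Finset.univ.filter (fun t => σ t ∈ Finset.univ.image f) with hK
  have hKcard : K.card = I'.length := by
    have hKeq : K = Finset.univ.image (fun i => σ.symm (f i)) := by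
      ext t
      simp only [hK, Finset.mem_filter, Finset.mem_univ, true_and, Finset.mem_image,
        Equiv.symm_apply_eq]
    rw [hKeq, Finset.card_image_of_injective _
      (fun a b hab => f.injective (σ.symm.injective hab))]
    simp
  set e := K.orderIsoOfFin hKcard with he
  set g : Fin I'.length → Fin I.length := fun t' => (e t' : Fin I.length) with hg
  have hgmem : ∀ t', g t' ∈ K := fun t' => (e t').2
  have hgmono : StrictMono g := fun a b hab => by
    have := e.strictMono hab
    exact this
  have hkept : ∀ t', ∃ i, f i = σ (g t') := by
    intro t'
    have := hgmem t'
    simp only [hK, Finset.mem_filter, Finset.mem_univ, true_and, Finset.mem_image] at this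
    exact this
  set σ'f : Fin I'.length → Fin I'.length :=
    fun t' => Function.invFun f (σ (g t')) with hσ'f
  have hfσ' : ∀ t', f (σ'f t') = σ (g t') := fun t' => Function.invFun_eq (hkept t')
  have hσ'inj : Function.Injective σ'f := by
    intro a b hab
    have h2 : σ (g a) = σ (g b) := by rw [← hfσ', ← hfσ', hab]
    exact hgmono.injective (σ.injective h2)
  set σ' : Fin I'.length ≃ Fin I'.length :=
    Equiv.ofBijective σ'f (Finite.injective_iff_bijective.mp hσ'inj) with hσ'
  -- key inequality
  have hkey : ∀ t' : Fin I'.length, (σ'f t' : ℕ) < M + (t' : ℕ) := by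
    intro t'
    by_contra hcon
    push_neg at hcon
    set j := σ'f t' with hj
    set t := g t' with ht
    set p := σ t with hp
    have hpj : f j = p := hfσ' t'
    have hpM : (p : ℕ) < M + (t : ℕ) := (hσ t).2
    set BS : Finset (Fin I.length) :=
      Finset.univ.filter (fun q => (q : ℕ) < M + (t : ℕ)) with hBS
    set AS : Finset (Fin I.length) :=
      BS.filter (fun q => (t : ℕ) ≤ ((σ.symm q : Fin I.length) : ℕ)) with hAS
    -- |BS| ≤ M + t
    have hBScard : BS.card ≤ M + (t : ℕ) := by
      have hBSmem : ∀ q, q ∈ BS → (q : ℕ) < M + (t : ℕ) := by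
        intro q hq
        rw [hBS, Finset.mem_filter] at hq
        exact hq.2
      have := Finset.card_le_card_of_injOn (fun q : Fin I.length => (q : ℕ))
        (fun q hq => Finset.mem_range.mpr (hBSmem q hq))
        (fun a _ b _ hab => Fin.val_injective hab)
      rwa [Finset.card_range] at this
    -- t ≤ |BS \ AS|
    have hBA : (t : ℕ) ≤ (BS \ AS).card := by
      have hsub : (Finset.Iio t).image σ ⊆ BS \ AS := by
        intro q hq
        simp only [Finset.mem_image, Finset.mem_Iio] at hq
        obtain ⟨s, hs, rfl⟩ := hq
        have hsv : (s : ℕ) < (t : ℕ) := hs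
        have h1 : ((σ s : Fin I.length) : ℕ) < M + (t : ℕ) :=
          lt_of_lt_of_le (hσ s).2 (by omega)
        simp only [Finset.mem_sdiff, hAS, hBS, Finset.mem_filter, Finset.mem_univ,
          true_and, Equiv.symm_apply_apply, not_and, not_le]
        exact ⟨h1, fun _ => hsv⟩
      have := Finset.card_le_card hsub
      rwa [Finset.card_image_of_injective _ σ.injective, Fin.card_Iio] at this
    have hAcard : AS.card ≤ M := by
      have hsub : AS ⊆ BS := by rw [hAS]; exact Finset.filter_subset _ _
      have h1 := Finset.card_sdiff_add_card_eq_card hsub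
      omega
    -- lower bound
    set V : Finset (Fin I'.length) :=
      (Finset.Iio j).filter (fun i => (t : ℕ) ≤ ((σ.symm (f i) : Fin I.length) : ℕ)) with hV
    set W : Finset (Fin I'.length) :=
      (Finset.Iio j).filter (fun i => ¬ ((t : ℕ) ≤ ((σ.symm (f i) : Fin I.length) : ℕ))) with hW
    have hWcard : W.card ≤ (t' : ℕ) := by
      have hmemK : ∀ i : Fin I'.length, σ.symm (f i) ∈ K := by
        intro i
        simp only [hK, Finset.mem_filter, Finset.mem_univ, true_and, Finset.mem_image,
          Equiv.apply_symm_apply]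
        exact ⟨i, rfl⟩
      have hWmem : ∀ i, i ∈ W → (σ.symm (f i) : Fin I.length) < t := by
        intro i hi
        rw [hW, Finset.mem_filter, Finset.mem_Iio] at hi
        have := hi.2
        rw [not_le] at this
        exact this
      have := Finset.card_le_card_of_injOn (s := W) (t := Finset.Iio t')
        (fun i : Fin I'.length => e.symm ⟨σ.symm (f i), hmemK i⟩)
        (fun i hi => by
          simp only [Finset.mem_coe, Finset.mem_Iio]
          rw [← e.lt_iff_lt, e.apply_symm_apply]
          exact hWmem i hi)
        (fun a _ b _ hab => by
          have h2 := e.symm.injective hab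
          have h3 : σ.symm (f a) = σ.symm (f b) := congrArg Subtype.val h2
          exact f.injective (σ.symm.injective h3))
      rwa [Fin.card_Iio] at this
    have hVW : V.card + W.card = (j : ℕ) := by
      rw [hV, hW, Finset.card_filter_add_card_filter_not, Fin.card_Iio]
    have hVcard : M ≤ V.card := by omega
    -- build M+1 elements of AS
    have hVsub : V.image f ⊆ AS := by
      intro q hq
      simp only [Finset.mem_image] at hq
      obtain ⟨i, hi, rfl⟩ := hq
      simp only [hV, Finset.mem_filter, Finset.mem_Iio] at hi
      have hlt : f i < f j := f.strictMono hi.1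
      rw [hpj] at hlt
      simp only [hAS, hBS, Finset.mem_filter, Finset.mem_univ, true_and]
      exact ⟨lt_trans (Fin.lt_def.mp hlt) hpM, hi.2⟩
    have hpAS : p ∈ AS := by
      simp only [hAS, hBS, Finset.mem_filter, Finset.mem_univ, true_and, hp,
        Equiv.symm_apply_apply]
      exact ⟨hpM, le_rfl⟩
    have hpnot : p ∉ V.image f := by
      intro hmem
      simp only [Finset.mem_image] at hmem
      obtain ⟨i, hi, hfi⟩ := hmem
      simp only [hV, Finset.mem_filter, Finset.mem_Iio] at hi
      have := f.strictMono hi.1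
      rw [hfi, hpj] at this
      exact lt_irrefl _ this
    have hins : insert p (V.image f) ⊆ AS := by
      intro q hq
      rcases Finset.mem_insert.mp hq with rfl | hq
      · exact hpAS
      · exact hVsub hq
    have hcard2 : M + 1 ≤ AS.card := by
      have h1 := Finset.card_le_card hins
      rw [Finset.card_insert_of_notMem hpnot,
        Finset.card_image_of_injective _ f.injective] at h1
      omega
    omega
  -- define S'
  set S' : List α := (List.finRange I'.length).map (fun t' => I'.get (σ'f t')) with hS'
  have hS'len : S'.length = I'.length := by simp [hS']
  have hS'get : ∀ t' : Fin I'.length, S'.get (Fin.cast hS'len.symm t') = I'.get (σ'f t') := by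
    intro t'
    simp [hS', List.get_eq_getElem, List.getElem_finRange, Fin.cast]
  refine ⟨S', ⟨hS'len, σ', fun t' => ⟨?_, hkey t'⟩⟩, ?_⟩
  · rw [List.getElem?_eq_getElem (by rw [hS'len]; exact t'.isLt),
      List.getElem?_eq_getElem ((σ' t' : Fin I'.length).isLt)]
    have h1 := hS'get t'
    simp only [List.get_eq_getElem] at h1
    simp only [Fin.coe_cast] at h1
    rw [h1]
    rfl
  · rw [List.sublist_iff_exists_fin_orderEmbedding_get_eq]
    refine ⟨OrderEmbedding.ofStrictMono
      (fun ix => Fin.cast hlenS.symm (g (Fin.cast hS'len ix)))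
      (fun a b hab => by
        have : (Fin.cast hS'len a) < (Fin.cast hS'len b) := hab
        exact hgmono this), ?_⟩
    intro ix
    have h1 := hS'get (Fin.cast hS'len ix)
    have h2 : S'.get (Fin.cast hS'len.symm (Fin.cast hS'len ix)) = S'.get ix := rfl
    rw [h2] at h1
    rw [h1]
    show I'.get (σ'f (Fin.cast hS'len ix)) = S.get (Fin.cast hlenS.symm (g (Fin.cast hS'len ix)))
    rw [hget (g (Fin.cast hS'len ix)), ← hfσ' (Fin.cast hS'len ix), ← hf]

end RunGen

open RunGen

/-- For any buffer size `M` and inputs `I`, `I'`, if `I'` is a subsequence of `I`,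
then `OPT M I' ≤ OPT M I`. -/
theorem stmt_0 {α : Type*} [LinearOrder α] (M : ℕ) (I I' : List α) (h : I'.Sublist I) :
    OPT M I' ≤ OPT M I := by
  classical
  by_cases hI' : I' = []
  · subst hI'
    have h0 : (0 : ℕ) ∈ {n | ∃ S : List α, IsFeasibleOutput M ([] : List α) S ∧ RunsInto S n} :=
      ⟨[], feasible_nil M, ⟨[], rfl, rfl, by simp⟩⟩
    have h1 := Nat.sInf_le h0
    unfold OPT
    omega
  · by_cases hne : {n | ∃ S : List α, IsFeasibleOutput M I S ∧ RunsInto S n}.Nonempty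
    · obtain ⟨S, hfeas, hruns⟩ := Nat.sInf_mem hne
      obtain ⟨S', hfeas', hsub⟩ := key_step M I I' S h hI' hfeas
      have hmem' : sInf {n | ∃ S : List α, IsFeasibleOutput M I S ∧ RunsInto S n} ∈
          {n | ∃ S'' : List α, IsFeasibleOutput M I' S'' ∧ RunsInto S'' n} :=
        ⟨S', hfeas', runsInto_sublist hsub hruns⟩
      exact Nat.sInf_le hmem'
    · rw [Set.not_nonempty_iff_eq_empty] at hne
      have h2 : OPT M I = 0 := by unfold OPT; rw [hne, Nat.sInf_empty]
      rw [h2]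
      have hempty : {n | ∃ S' : List α, IsFeasibleOutput M I' S' ∧ RunsInto S' n} = ∅ := by
        by_contra hne'
        rw [← Ne, ← Set.nonempty_iff_ne_empty] at hne'
        obtain ⟨m, S', hfeas', _⟩ := hne'
        obtain ⟨hlen', σ', hσ'⟩ := hfeas'
        have hpos : 0 < I'.length := List.length_pos_iff.mpr hI'
        have hM : 1 ≤ M := by
          have h3 := (hσ' ⟨0, hpos⟩).2
          have h4 : ((⟨0, hpos⟩ : Fin I'.length) : ℕ) = 0 := rfl
          rw [h4] at h3
          omega
        have h5 : I.length ∈ {n | ∃ S : List α, IsFeasibleOutput M I S ∧ RunsInto S n} :=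
          ⟨I, feasible_self M hM I, runsInto_self I⟩
        rw [hne] at h5
        exact h5
      unfold OPT
      rw [hempty, Nat.sInf_empty]
end

section
/- At any decision state (a buffer B of at most M elements together with a remaining input sequence J), the maximal increasing run from that state covers every increasing run writable from that state: every element written in any increasing run started from that state also occurs in the maximal increasing run. Symmetrically, the maximal decreasing run covers every decreasing run writable from that state. -/
open RunGen

section Aux

variable {α : Type*} [LinearOrder α]

private lemma min?_spec {l : List α} {a : α} (h : l.min? = some a) :
    a ∈ l ∧ ∀ b ∈ l, a ≤ b := by
  constructor
  · exact List.min?_mem h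
  · exact fun b hb => (List.le_min?_iff h).1 le_rfl b hb

private lemma max?_spec {l : List α} {a : α} (h : l.max? = some a) :
    a ∈ l ∧ ∀ b ∈ l, b ≤ a := by
  constructor
  · exact List.max?_mem h
  · exact fun b hb => (List.max?_le_iff h).1 le_rfl b hb

/-- Candidate list for `nextUp`. -/
private def candU (last? : Option α) (B : List α) : List α :=
  match last? with
  | none => B
  | some l => B.filter fun x => decide (l ≤ x)

private def candD (last? : Option α) (B : List α) : List α :=
  match last? with
  | none => B
  | some l => B.filter fun x => decide (x ≤ l)

private lemma nextUp_eq (last? : Option α) (B : List α) :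
    nextUp last? B = (candU last? B).min? := by
  cases last? <;> rfl

private lemma nextDown_eq (last? : Option α) (B : List α) :
    nextDown last? B = (candD last? B).max? := by
  cases last? <;> rfl

private lemma mem_candU {last? : Option α} {B : List α} {x : α} :
    x ∈ candU last? B ↔ x ∈ B ∧ ∀ l ∈ last?, l ≤ x := by
  cases last? <;> simp [candU]

private lemma mem_candD {last? : Option α} {B : List α} {x : α} :
    x ∈ candD last? B ↔ x ∈ B ∧ ∀ l ∈ last?, x ≤ l := by
  cases last? <;> simp [candD]

omit [LinearOrder α] in
private lemma take_drop_len (J : List α) :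
    (J.take 1).length + (J.drop 1).length = J.length := by
  rw [← List.length_append, List.take_append_drop]

/-- Persistence: a buffered element compatible with the last write eventually
appears in the maximal increasing run. -/
private lemma memIncAux : ∀ (fuel : ℕ) (last? : Option α) (B J : List α) (x : α),
    B.length + J.length ≤ fuel → x ∈ B → (∀ l ∈ last?, l ≤ x) →
    x ∈ (incAux fuel last? B J).1
  | 0, _, B, J, x, hf, hx, _ => by
    have := List.length_pos_iff.mpr (List.ne_nil_of_mem hx); omega
  | fuel + 1, last?, B, J, x, hf, hx, hle => by
    have hxc : x ∈ candU last? B := mem_candU.mpr ⟨hx, hle⟩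
    obtain ⟨y, hy⟩ := Option.isSome_iff_exists.mp (List.isSome_min?_of_mem hxc)
    obtain ⟨hyc, hymin⟩ := min?_spec hy
    have hyx : y ≤ x := hymin x hxc
    have hyB : y ∈ B := (mem_candU.mp hyc).1
    have hstep : incAux (fuel + 1) last? B J =
        (y :: (incAux fuel (some y) (B.erase y ++ J.take 1) (J.drop 1)).1,
          (incAux fuel (some y) (B.erase y ++ J.take 1) (J.drop 1)).2) := by
      rw [incAux, nextUp_eq, hy]
    rw [hstep]
    rcases eq_or_ne x y with h | h
    · exact h ▸ List.mem_cons_self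
    · refine List.mem_cons_of_mem _ (memIncAux fuel (some y) _ _ x ?_ ?_ ?_)
      · have h1 := take_drop_len (α := α) J
        have h2 : (B.erase y).length = B.length - 1 := List.length_erase_of_mem hyB
        have h3 : 0 < B.length := List.length_pos_iff.mpr (List.ne_nil_of_mem hx)
        simp only [List.length_append]; omega
      · exact List.mem_append_left _ ((List.mem_erase_of_ne h).mpr hx)
      · simpa using hyx

private lemma memDecAux : ∀ (fuel : ℕ) (last? : Option α) (B J : List α) (x : α),
    B.length + J.length ≤ fuel → x ∈ B → (∀ l ∈ last?, x ≤ l) →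
    x ∈ (decAux fuel last? B J).1
  | 0, _, B, J, x, hf, hx, _ => by
    have := List.length_pos_iff.mpr (List.ne_nil_of_mem hx); omega
  | fuel + 1, last?, B, J, x, hf, hx, hle => by
    have hxc : x ∈ candD last? B := mem_candD.mpr ⟨hx, hle⟩
    obtain ⟨y, hy⟩ := Option.isSome_iff_exists.mp (List.isSome_max?_of_mem hxc)
    obtain ⟨hyc, hymax⟩ := max?_spec hy
    have hyx : x ≤ y := hymax x hxc
    have hyB : y ∈ B := (mem_candD.mp hyc).1
    have hstep : decAux (fuel + 1) last? B J =
        (y :: (decAux fuel (some y) (B.erase y ++ J.take 1) (J.drop 1)).1,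
          (decAux fuel (some y) (B.erase y ++ J.take 1) (J.drop 1)).2) := by
      rw [decAux, nextDown_eq, hy]
    rw [hstep]
    rcases eq_or_ne x y with h | h
    · exact h ▸ List.mem_cons_self
    · refine List.mem_cons_of_mem _ (memDecAux fuel (some y) _ _ x ?_ ?_ ?_)
      · have h1 := take_drop_len (α := α) J
        have h2 : (B.erase y).length = B.length - 1 := List.length_erase_of_mem hyB
        have h3 : 0 < B.length := List.length_pos_iff.mpr (List.ne_nil_of_mem hx)
        simp only [List.length_append]; omega
      · exact List.mem_append_left _ ((List.mem_erase_of_ne h).mpr hx)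
      · simpa using hyx

/-- Main exchange lemma for increasing runs. -/
private lemma coverIncAux {la : Option α} {Ba J r : List α}
    (hr : IncRunFrom la Ba J r) :
    ∀ (lg : Option α) (Bg : List α) (fuel : ℕ),
      Bg.length + J.length ≤ fuel →
      (∀ z : α, (∀ l ∈ la, l ≤ z) → (∀ l ∈ lg, l ≤ z) ∧ Ba.count z ≤ Bg.count z) →
      ∀ x ∈ r, x ∈ (incAux fuel lg Bg J).1 := by
  induction hr with
  | nil => intro _ _ _ _ _ x hx; exact absurd hx (List.not_mem_nil)
  | cons la Ba J x r hx hle h ih =>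
    intro lg Bg fuel hfuel hc z hz
    obtain ⟨hlgx, hcnt⟩ := hc x hle
    have hxBg : x ∈ Bg := by
      have := List.count_pos_iff.mpr hx
      exact List.count_pos_iff.mp (by omega)
    have hxc : x ∈ candU lg Bg := mem_candU.mpr ⟨hxBg, hlgx⟩
    obtain ⟨y, hy⟩ := Option.isSome_iff_exists.mp (List.isSome_min?_of_mem hxc)
    obtain ⟨hyc, hymin⟩ := min?_spec hy
    have hyx : y ≤ x := hymin x hxc
    obtain ⟨hyB, hlgy⟩ := mem_candU.mp hyc
    have hBgpos : 0 < Bg.length := List.length_pos_iff.mpr (List.ne_nil_of_mem hxBg)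
    obtain ⟨f, rfl⟩ : ∃ f, fuel = f + 1 := ⟨fuel - 1, by omega⟩
    rcases List.mem_cons.mp hz with rfl | hzr
    · exact memIncAux (f + 1) lg Bg J z hfuel hxBg hlgx
    · have hstep : incAux (f + 1) lg Bg J =
          (y :: (incAux f (some y) (Bg.erase y ++ J.take 1) (J.drop 1)).1,
            (incAux f (some y) (Bg.erase y ++ J.take 1) (J.drop 1)).2) := by
        rw [incAux, nextUp_eq, hy]
      rw [hstep]
      refine List.mem_cons_of_mem _ (ih (some y) (Bg.erase y ++ J.take 1) f ?_ ?_ z hzr)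
      · have h1 := take_drop_len (α := α) J
        have h2 : (Bg.erase y).length = Bg.length - 1 := List.length_erase_of_mem hyB
        simp only [List.length_append]; omega
      · intro w hw
        have hxw : x ≤ w := by simpa using hw
        obtain ⟨_, hcw⟩ := hc w (fun l hl => le_trans (hle l hl) hxw)
        refine ⟨by simpa using le_trans hyx hxw, ?_⟩
        have himp : w = y → w = x := fun hh => le_antisymm (hh ▸ hyx) hxw
        simp only [List.count_append, List.count_erase, beq_iff_eq]
        have hkey : y = w → x = w := fun hh => (himp hh.symm).symm
        split_ifs with h1 h2 h3
        · omega
        · omega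
        · exact absurd (hkey h3) h1
        · omega

/-- Main exchange lemma for decreasing runs. -/
private lemma coverDecAux {la : Option α} {Ba J r : List α}
    (hr : DecRunFrom la Ba J r) :
    ∀ (lg : Option α) (Bg : List α) (fuel : ℕ),
      Bg.length + J.length ≤ fuel →
      (∀ z : α, (∀ l ∈ la, z ≤ l) → (∀ l ∈ lg, z ≤ l) ∧ Ba.count z ≤ Bg.count z) →
      ∀ x ∈ r, x ∈ (decAux fuel lg Bg J).1 := by
  induction hr with
  | nil => intro _ _ _ _ _ x hx; exact absurd hx (List.not_mem_nil)
  | cons la Ba J x r hx hle h ih =>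
    intro lg Bg fuel hfuel hc z hz
    obtain ⟨hlgx, hcnt⟩ := hc x hle
    have hxBg : x ∈ Bg := by
      have := List.count_pos_iff.mpr hx
      exact List.count_pos_iff.mp (by omega)
    have hxc : x ∈ candD lg Bg := mem_candD.mpr ⟨hxBg, hlgx⟩
    obtain ⟨y, hy⟩ := Option.isSome_iff_exists.mp (List.isSome_max?_of_mem hxc)
    obtain ⟨hyc, hymax⟩ := max?_spec hy
    have hyx : x ≤ y := hymax x hxc
    obtain ⟨hyB, hlgy⟩ := mem_candD.mp hyc
    have hBgpos : 0 < Bg.length := List.length_pos_iff.mpr (List.ne_nil_of_mem hxBg)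
    obtain ⟨f, rfl⟩ : ∃ f, fuel = f + 1 := ⟨fuel - 1, by omega⟩
    rcases List.mem_cons.mp hz with rfl | hzr
    · exact memDecAux (f + 1) lg Bg J z hfuel hxBg hlgx
    · have hstep : decAux (f + 1) lg Bg J =
          (y :: (decAux f (some y) (Bg.erase y ++ J.take 1) (J.drop 1)).1,
            (decAux f (some y) (Bg.erase y ++ J.take 1) (J.drop 1)).2) := by
        rw [decAux, nextDown_eq, hy]
      rw [hstep]
      refine List.mem_cons_of_mem _ (ih (some y) (Bg.erase y ++ J.take 1) f ?_ ?_ z hzr)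
      · have h1 := take_drop_len (α := α) J
        have h2 : (Bg.erase y).length = Bg.length - 1 := List.length_erase_of_mem hyB
        simp only [List.length_append]; omega
      · intro w hw
        have hxw : w ≤ x := by simpa using hw
        obtain ⟨_, hcw⟩ := hc w (fun l hl => le_trans hxw (hle l hl))
        refine ⟨by simpa using le_trans hxw hyx, ?_⟩
        have himp : w = y → w = x := fun hh => le_antisymm hxw (hh ▸ hyx)
        simp only [List.count_append, List.count_erase, beq_iff_eq]
        have hkey : y = w → x = w := fun hh => (himp hh.symm).symm
        split_ifs with h1 h2 h3
        · omega
        · omega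
        · exact absurd (hkey h3) h1
        · omega

end Aux

/-- At any decision state (buffer `B` of at most `M` elements, remaining input `J`), the
maximal increasing (resp. decreasing) run covers every increasing (resp. decreasing) run
writable from that state: every element written in such a run also occurs in the maximal
run in the same direction. -/
theorem stmt_1 {α : Type*} [LinearOrder α] (M : ℕ) (B J : List α) (hB : B.length ≤ M) :
    (∀ r : List α, IncRunFrom none B J r → ∀ x ∈ r, x ∈ maxIncRun B J) ∧
    (∀ r : List α, DecRunFrom none B J r → ∀ x ∈ r, x ∈ maxDecRun B J) := by
  constructor
  · intro r hr x hx
    exact coverIncAux hr none B (B.length + J.length) le_rfl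
      (fun z _ => ⟨by simp, le_rfl⟩) x hx
  · intro r hr x hx
    exact coverDecAux hr none B (B.length + J.length) le_rfl
      (fun z _ => ⟨by simp, le_rfl⟩) x hx
end

section
/- For every input I and buffer size M, there exists a proper M-feasible output S of I, i.e., one in which every run is maximal, such that R(S) = OPT_M(I). -/
open RunGen


namespace RunGen

variable {α : Type*} [LinearOrder α]

set_option linter.unusedSectionVars false

theorem min?_spec {l : List α} {a : α} : l.min? = some a ↔ a ∈ l ∧ ∀ b ∈ l, a ≤ b :=
  List.min?_eq_some_iff

theorem max?_spec {l : List α} {a : α} : l.max? = some a ↔ a ∈ l ∧ ∀ b ∈ l, b ≤ a :=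
  List.max?_eq_some_iff

theorem perm_getElem_cons_eraseIdx (l : List α) (i : ℕ) (h : i < l.length) :
    l.Perm (l[i] :: l.eraseIdx i) := by
  conv_lhs => rw [← List.take_append_drop i l, ← List.getElem_cons_drop h]
  rw [List.eraseIdx_eq_take_drop_succ]
  exact List.perm_middle

theorem perm_eraseIdx_erase (l : List α) (i : ℕ) (h : i < l.length) :
    (l.eraseIdx i).Perm (l.erase l[i]) := by
  have h1 := perm_getElem_cons_eraseIdx l i h
  have h2 : l.Perm (l[i] :: l.erase l[i]) :=
    List.perm_cons_erase (List.getElem_mem h)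
  exact (h1.symm.trans h2).cons_inv

theorem writes_append {B J S₁ C K S₂ B' J' : List α}
    (h₁ : Writes B J S₁ C K) (h₂ : Writes C K S₂ B' J') :
    Writes B J (S₁ ++ S₂) B' J' := by
  induction h₁ with
  | nil => simpa using h₂
  | step B J i S B'' J'' h hrest ih => exact Writes.step _ _ i _ _ _ h (ih h₂)

theorem writes_split {B J S₁ S₂ B' J' : List α}
    (h : Writes B J (S₁ ++ S₂) B' J') :
    ∃ C K, Writes B J S₁ C K ∧ Writes C K S₂ B' J' := by
  induction S₁ generalizing B J with
  | nil => exact ⟨B, J, Writes.nil B J, h⟩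
  | cons x S₁ ih =>
    rw [List.cons_append] at h
    cases h with
    | step _ _ i _ _ _ hi hrest =>
      obtain ⟨C, K, w1, w2⟩ := ih hrest
      exact ⟨C, K, Writes.step _ _ i _ _ _ hi w1, w2⟩

theorem writes_perm {B J S B' J' : List α} (h : Writes B J S B' J') :
    ∀ {C : List α}, B.Perm C → ∃ C', B'.Perm C' ∧ Writes C J S C' J' := by
  induction h with
  | nil B J => exact fun hp => ⟨_, hp, Writes.nil _ _⟩
  | step B J i S B' J' hi hrest ih =>
    intro C hp
    have hmem : B[i] ∈ C := hp.mem_iff.mp (List.getElem_mem hi)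
    obtain ⟨j, hj, hCj⟩ := List.mem_iff_getElem.mp hmem
    have hpe : (B.eraseIdx i).Perm (C.eraseIdx j) := by
      have h1 := perm_getElem_cons_eraseIdx B i hi
      have h2 := perm_getElem_cons_eraseIdx C j hj
      rw [hCj] at h2
      exact ((h1.symm.trans hp).trans h2).cons_inv
    obtain ⟨C', hC', w⟩ := ih (hpe.append_right (J.take 1))
    refine ⟨C', hC', ?_⟩
    have := Writes.step C J j S C' J' hj w
    rwa [hCj] at this

theorem writes_drop {B J S B' J' : List α} (h : Writes B J S B' J') :
    J' = J.drop S.length ∧ (B' ++ S).Perm (B ++ J.take S.length) := by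
  induction h with
  | nil B J => simp
  | step B J i S B' J' hi hrest ih =>
    obtain ⟨hJ, hp⟩ := ih
    constructor
    · rw [hJ, List.drop_drop]; simp [Nat.add_comm]
    · have h1 : (B' ++ B[i] :: S).Perm (B[i] :: (B' ++ S)) := List.perm_middle
      have h2 : (B[i] :: (B' ++ S)).Perm
          (B[i] :: ((B.eraseIdx i ++ J.take 1) ++ (J.drop 1).take S.length)) := hp.cons _
      have h3 : (B[i] :: ((B.eraseIdx i ++ J.take 1) ++ (J.drop 1).take S.length)).Perm
          ((B[i] :: B.eraseIdx i) ++ (J.take 1 ++ (J.drop 1).take S.length)) := by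
        simp
      have h4 : ((B[i] :: B.eraseIdx i) ++ (J.take 1 ++ (J.drop 1).take S.length)).Perm
          (B ++ J.take (B[i] :: S).length) := by
        have hb := (perm_getElem_cons_eraseIdx B i hi).symm
        have ht : J.take 1 ++ (J.drop 1).take S.length = J.take (B[i] :: S).length := by
          rw [List.length_cons, ← List.take_add]
          congr 1
          omega
        rw [ht]
        exact hb.append_right _
      exact ((h1.trans h2).trans h3).trans h4

theorem writes_length {B J S : List α} (h : Writes B J S [] []) :
    S.length = B.length + J.length := by
  obtain ⟨hJ, hp⟩ := writes_drop h
  have h1 := hp.length_eq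
  have h2 : J.length ≤ S.length := by
    by_contra hc
    push_neg at hc
    have : J.drop S.length ≠ [] := by
      simp [List.drop_eq_nil_iff]
      omega
    exact this hJ.symm
  simp [List.length_take] at h1
  omega

theorem nextUp_some {last? : Option α} {B : List α} {x : α} (h : nextUp last? B = some x) :
    x ∈ B ∧ (∀ l ∈ last?, l ≤ x) ∧ ∀ y ∈ B, (∀ l ∈ last?, l ≤ y) → x ≤ y := by
  cases last? with
  | none =>
    obtain ⟨hm, hmin⟩ := min?_spec.mp h
    exact ⟨hm, by simp, fun y hy _ => hmin y hy⟩
  | some l =>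
    obtain ⟨hm, hmin⟩ := min?_spec.mp h
    simp only [List.mem_filter, decide_eq_true_eq] at hm hmin
    exact ⟨hm.1, by simpa using hm.2, fun y hy hl => hmin y ⟨hy, hl l (by simp)⟩⟩

theorem nextUp_none {last? : Option α} {B : List α} (h : nextUp last? B = none)
    {y : α} (hy : y ∈ B) (hl : ∀ l ∈ last?, l ≤ y) : False := by
  cases last? with
  | none =>
    rw [nextUp, List.min?_eq_none_iff] at h
    simp [h] at hy
  | some l =>
    rw [nextUp, List.min?_eq_none_iff, List.filter_eq_nil_iff] at h
    exact h y hy (by simpa using hl l (by simp))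

theorem nextDown_some {last? : Option α} {B : List α} {x : α} (h : nextDown last? B = some x) :
    x ∈ B ∧ (∀ l ∈ last?, x ≤ l) ∧ ∀ y ∈ B, (∀ l ∈ last?, y ≤ l) → y ≤ x := by
  cases last? with
  | none =>
    obtain ⟨hm, hmin⟩ := max?_spec.mp h
    exact ⟨hm, by simp, fun y hy _ => hmin y hy⟩
  | some l =>
    obtain ⟨hm, hmin⟩ := max?_spec.mp h
    simp only [List.mem_filter, decide_eq_true_eq] at hm hmin
    exact ⟨hm.1, by simpa using hm.2, fun y hy hl => hmin y ⟨hy, hl l (by simp)⟩⟩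

theorem nextDown_none {last? : Option α} {B : List α} (h : nextDown last? B = none)
    {y : α} (hy : y ∈ B) (hl : ∀ l ∈ last?, y ≤ l) : False := by
  cases last? with
  | none =>
    rw [nextDown, List.max?_eq_none_iff] at h
    simp [h] at hy
  | some l =>
    rw [nextDown, List.max?_eq_none_iff, List.filter_eq_nil_iff] at h
    exact h y hy (by simpa using hl l (by simp))

/-- `incAux` with the canonical fuel. -/
def XI (last? : Option α) (B J : List α) : List α × List α × List α :=
  incAux (B.length + J.length) last? B J

/-- `decAux` with the canonical fuel. -/
def XD (last? : Option α) (B J : List α) : List α × List α × List α :=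
  decAux (B.length + J.length) last? B J

theorem XI_eq (last? : Option α) (B J : List α) :
    XI last? B J =
      match nextUp last? B with
      | none => ([], B, J)
      | some x => ((x :: (XI (some x) (B.erase x ++ J.take 1) (J.drop 1)).1,
          (XI (some x) (B.erase x ++ J.take 1) (J.drop 1)).2)) := by
  cases h : nextUp last? B with
  | none =>
    cases hn : B.length + J.length with
    | zero => simp [XI, hn, incAux]
    | succ k => simp [XI, hn, incAux, h]
  | some x =>
    have hx : x ∈ B := (nextUp_some h).1
    have hB : B ≠ [] := List.ne_nil_of_mem hx
    have hpos : 1 ≤ B.length := List.length_pos_iff.mpr hB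
    have hlen : (B.erase x ++ J.take 1).length + (J.drop 1).length = B.length + J.length - 1 := by
      have := List.length_erase_of_mem hx
      simp only [List.length_append, List.length_take, List.length_drop, this]
      omega
    cases hn : B.length + J.length with
    | zero => omega
    | succ k =>
      simp only [XI, hn, incAux, h]
      rw [hn] at hlen
      simp only [Nat.succ_sub_one] at hlen
      rw [hlen]

theorem XD_eq (last? : Option α) (B J : List α) :
    XD last? B J =
      match nextDown last? B with
      | none => ([], B, J)
      | some x => ((x :: (XD (some x) (B.erase x ++ J.take 1) (J.drop 1)).1,
          (XD (some x) (B.erase x ++ J.take 1) (J.drop 1)).2)) := by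
  cases h : nextDown last? B with
  | none =>
    cases hn : B.length + J.length with
    | zero => simp [XD, hn, decAux]
    | succ k => simp [XD, hn, decAux, h]
  | some x =>
    have hx : x ∈ B := (nextDown_some h).1
    have hB : B ≠ [] := List.ne_nil_of_mem hx
    have hpos : 1 ≤ B.length := List.length_pos_iff.mpr hB
    have hlen : (B.erase x ++ J.take 1).length + (J.drop 1).length = B.length + J.length - 1 := by
      have := List.length_erase_of_mem hx
      simp only [List.length_append, List.length_take, List.length_drop, this]
      omega
    cases hn : B.length + J.length with
    | zero => omega
    | succ k =>
      simp only [XD, hn, decAux, h]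
      rw [hn] at hlen
      simp only [Nat.succ_sub_one] at hlen
      rw [hlen]

theorem XI_writes (last? : Option α) (B J : List α) :
    Writes B J (XI last? B J).1 (XI last? B J).2.1 (XI last? B J).2.2 := by
  generalize hn : B.length + J.length = n
  induction n using Nat.strong_induction_on generalizing last? B J with
  | _ n ih =>
    rw [XI_eq]
    cases h : nextUp last? B with
    | none => exact Writes.nil B J
    | some x =>
      have hx : x ∈ B := (nextUp_some h).1
      have hpos : 1 ≤ B.length := List.length_pos_iff.mpr (List.ne_nil_of_mem hx)
      have hlen : (B.erase x ++ J.take 1).length + (J.drop 1).length = n - 1 := by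
        have := List.length_erase_of_mem hx
        simp only [List.length_append, List.length_take, List.length_drop, this]
        omega
      have hrec := ih (n - 1) (by omega) (some x) (B.erase x ++ J.take 1) (J.drop 1) hlen
      have hi : B.idxOf x < B.length := List.idxOf_lt_length_iff.mpr hx
      have := Writes.step B J (B.idxOf x) _ _ _ hi
        (by rw [← List.erase_eq_eraseIdx_of_idxOf rfl]; exact hrec)
      simpa [List.getElem_idxOf] using this

theorem XD_writes (last? : Option α) (B J : List α) :
    Writes B J (XD last? B J).1 (XD last? B J).2.1 (XD last? B J).2.2 := by
  generalize hn : B.length + J.length = n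
  induction n using Nat.strong_induction_on generalizing last? B J with
  | _ n ih =>
    rw [XD_eq]
    cases h : nextDown last? B with
    | none => exact Writes.nil B J
    | some x =>
      have hx : x ∈ B := (nextDown_some h).1
      have hpos : 1 ≤ B.length := List.length_pos_iff.mpr (List.ne_nil_of_mem hx)
      have hlen : (B.erase x ++ J.take 1).length + (J.drop 1).length = n - 1 := by
        have := List.length_erase_of_mem hx
        simp only [List.length_append, List.length_take, List.length_drop, this]
        omega
      have hrec := ih (n - 1) (by omega) (some x) (B.erase x ++ J.take 1) (J.drop 1) hlen
      have hi : B.idxOf x < B.length := List.idxOf_lt_length_iff.mpr hx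
      have := Writes.step B J (B.idxOf x) _ _ _ hi
        (by rw [← List.erase_eq_eraseIdx_of_idxOf rfl]; exact hrec)
      simpa [List.getElem_idxOf] using this

theorem XI_chain (last? : Option α) (B J : List α) :
    (last?.toList ++ (XI last? B J).1).Chain' (· ≤ ·) := by
  generalize hn : B.length + J.length = n
  induction n using Nat.strong_induction_on generalizing last? B J with
  | _ n ih =>
    rw [XI_eq]
    cases h : nextUp last? B with
    | none => cases last? <;> simp [List.Chain']
    | some x =>
      have hx : x ∈ B := (nextUp_some h).1
      have hpos : 1 ≤ B.length := List.length_pos_iff.mpr (List.ne_nil_of_mem hx)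
      have hlen : (B.erase x ++ J.take 1).length + (J.drop 1).length = n - 1 := by
        have := List.length_erase_of_mem hx
        simp only [List.length_append, List.length_take, List.length_drop, this]
        omega
      have hrec := ih (n - 1) (by omega) (some x) (B.erase x ++ J.take 1) (J.drop 1) hlen
      simp only [Option.toList_some, List.singleton_append] at hrec
      cases last? with
      | none => simpa using hrec
      | some l =>
        have hl : l ≤ x := (nextUp_some h).2.1 l (by simp)
        simp only [Option.toList_some, List.singleton_append]
        refine List.isChain_cons.mpr ⟨?_, hrec⟩
        intro y hy
        simp only [List.head?_cons, Option.mem_def, Option.some.injEq] at hy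
        exact hy ▸ hl

theorem XD_chain (last? : Option α) (B J : List α) :
    (last?.toList ++ (XD last? B J).1).Chain' (· ≥ ·) := by
  generalize hn : B.length + J.length = n
  induction n using Nat.strong_induction_on generalizing last? B J with
  | _ n ih =>
    rw [XD_eq]
    cases h : nextDown last? B with
    | none => cases last? <;> simp [List.Chain']
    | some x =>
      have hx : x ∈ B := (nextDown_some h).1
      have hpos : 1 ≤ B.length := List.length_pos_iff.mpr (List.ne_nil_of_mem hx)
      have hlen : (B.erase x ++ J.take 1).length + (J.drop 1).length = n - 1 := by
        have := List.length_erase_of_mem hx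
        simp only [List.length_append, List.length_take, List.length_drop, this]
        omega
      have hrec := ih (n - 1) (by omega) (some x) (B.erase x ++ J.take 1) (J.drop 1) hlen
      simp only [Option.toList_some, List.singleton_append] at hrec
      cases last? with
      | none => simpa using hrec
      | some l =>
        have hl : x ≤ l := (nextDown_some h).2.1 l (by simp)
        simp only [Option.toList_some, List.singleton_append]
        refine List.isChain_cons.mpr ⟨?_, hrec⟩
        intro y hy
        simp only [List.head?_cons, Option.mem_def, Option.some.injEq] at hy
        exact hy ▸ hl


theorem writes_cons_inv {B J S B' J' : List α} {y : α} (h : Writes B J (y :: S) B' J') :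
    ∃ i, ∃ hi : i < B.length, B[i] = y ∧
      Writes (B.eraseIdx i ++ J.take 1) (J.drop 1) S B' J' := by
  cases h with
  | step _ _ i _ _ _ hi hrest => exact ⟨i, hi, rfl, hrest⟩

theorem writes_nil_inv {B J B' J' : List α} (h : Writes B J [] B' J') : B' = B ∧ J' = J := by
  cases h; exact ⟨rfl, rfl⟩

theorem erase_swap_perm {B t : List α} {x y : α} (hx : x ∈ B) (hy : y ∈ B) (hne : x ≠ y) :
    ((B.erase y ++ t).erase x).Perm ((B.erase x ++ t).erase y) := by
  refine Multiset.coe_eq_coe.mp ?_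
  have hxe : x ∈ (B : Multiset α).erase y := Multiset.mem_erase_of_ne hne |>.mpr hx
  have hye : y ∈ (B : Multiset α).erase x := Multiset.mem_erase_of_ne (Ne.symm hne) |>.mpr hy
  calc (↑((B.erase y ++ t).erase x) : Multiset α)
      = ((B : Multiset α).erase y + ↑t).erase x := by
        rw [← Multiset.coe_erase, ← Multiset.coe_add, Multiset.coe_erase]
    _ = ((B : Multiset α).erase y).erase x + ↑t := Multiset.erase_add_left_pos _ hxe
    _ = ((B : Multiset α).erase x).erase y + ↑t := by rw [Multiset.erase_comm]
    _ = ((B : Multiset α).erase x + ↑t).erase y := (Multiset.erase_add_left_pos _ hye).symm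
    _ = ↑((B.erase x ++ t).erase y) := by
        rw [← Multiset.coe_erase (l := B.erase x ++ t), ← Multiset.coe_add, Multiset.coe_erase]

theorem writes_exchange :
    ∀ (S B J : List α) (x : α), Writes B J S [] [] → x ∈ B →
      ∃ p, ∃ hp : p < S.length, S[p] = x ∧ Writes B J (x :: S.eraseIdx p) [] [] := by
  intro S
  induction S with
  | nil =>
    intro B J x hw hx
    obtain ⟨hB, _⟩ := writes_nil_inv hw
    rw [← hB] at hx; simp at hx
  | cons y S₁ ih =>
    intro B J x hw hx
    obtain ⟨i, hi, hBi, hrest⟩ := writes_cons_inv hw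
    by_cases hxy : x = y
    · refine ⟨0, by simp, by simp [hxy], ?_⟩
      simp only [List.eraseIdx_cons_zero]
      rw [hxy]; exact hw
    · have hxe : x ∈ B.eraseIdx i := by
        have hmem := (perm_getElem_cons_eraseIdx B i hi).mem_iff.mp hx
        rw [hBi] at hmem
        simp only [List.mem_cons] at hmem
        exact hmem.resolve_left hxy
      obtain ⟨p, hp, hSp, hw2⟩ := ih _ _ x hrest (List.mem_append_left _ hxe)
      obtain ⟨k, hk, hk2, hrest2⟩ := writes_cons_inv hw2
      have hyB : y ∈ B := hBi ▸ List.getElem_mem hi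
      have hyex : y ∈ B.erase x := (List.mem_erase_of_ne (Ne.symm hxy)).mpr hyB
      -- the buffer after writing x then y (new) is a perm of after writing y then x (old)
      have hperm1 : ((B.eraseIdx i ++ J.take 1).eraseIdx k).Perm
          ((B.erase x ++ J.take 1).erase y) := by
        have e1 : ((B.eraseIdx i ++ J.take 1).eraseIdx k).Perm
            ((B.eraseIdx i ++ J.take 1).erase x) := by
          have := perm_eraseIdx_erase (B.eraseIdx i ++ J.take 1) k hk
          rwa [hk2] at this
        have e2 : (B.eraseIdx i ++ J.take 1).Perm (B.erase y ++ J.take 1) := by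
          have := perm_eraseIdx_erase B i hi
          rw [hBi] at this
          exact this.append_right _
        exact (e1.trans (e2.erase x)).trans (erase_swap_perm hx hyB hxy)
      have hperm : ((B.eraseIdx i ++ J.take 1).eraseIdx k ++ (J.drop 1).take 1).Perm
          ((B.erase x ++ J.take 1).erase y ++ (J.drop 1).take 1) := hperm1.append_right _
      obtain ⟨C', hC', w3⟩ := writes_perm hrest2 hperm
      have hC'nil : C' = [] := (hC'.symm).eq_nil
      rw [hC'nil] at w3
      -- build the new schedule
      have hm : (B.erase x ++ J.take 1).idxOf y < (B.erase x ++ J.take 1).length :=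
        List.idxOf_lt_length_iff.mpr (List.mem_append_left _ hyex)
      have w4 : Writes (B.erase x ++ J.take 1) (J.drop 1) (y :: S₁.eraseIdx p) [] [] := by
        have := Writes.step (B.erase x ++ J.take 1) (J.drop 1)
          ((B.erase x ++ J.take 1).idxOf y) _ _ _ hm
          (by rw [← List.erase_eq_eraseIdx_of_idxOf rfl]; exact w3)
        simpa [List.getElem_idxOf] using this
      have hj : B.idxOf x < B.length := List.idxOf_lt_length_iff.mpr hx
      have w5 : Writes B J (x :: y :: S₁.eraseIdx p) [] [] := by
        have := Writes.step B J (B.idxOf x) _ _ _ hj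
          (by rw [← List.erase_eq_eraseIdx_of_idxOf rfl]; exact w4)
        simpa [List.getElem_idxOf] using this
      exact ⟨p + 1, by simpa using Nat.succ_lt_succ hp, by simpa using hSp, w5⟩

theorem isRun_sublist_s2 {l₁ l₂ : List α} (h : IsRun l₂) (hs : l₁.Sublist l₂) : IsRun l₁ := by
  haveI : IsTrans α (· ≥ ·) := ⟨fun a b c h h' => le_trans h' h⟩
  rcases h with h | h
  · exact Or.inl (h.sublist hs)
  · exact Or.inr (h.sublist hs)

theorem runs_eraseIdx : ∀ (P : List (List α)) (q : ℕ), (∀ r ∈ P, IsRun r) →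
    ∃ P' : List (List α), P'.flatten = P.flatten.eraseIdx q ∧ P'.length = P.length ∧
      ∀ r ∈ P', IsRun r := by
  intro P
  induction P with
  | nil => exact fun q _ => ⟨[], by simp, rfl, by simp⟩
  | cons r P ih =>
    intro q hruns
    by_cases hq : q < r.length
    · refine ⟨r.eraseIdx q :: P, ?_, by simp, ?_⟩
      · simp only [List.flatten_cons]
        rw [List.eraseIdx_append_of_lt_length hq]
      · intro s hs
        rcases List.mem_cons.mp hs with h | h
        · exact h ▸ isRun_sublist_s2 (hruns r (by simp)) (List.eraseIdx_sublist r q)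
        · exact hruns s (List.mem_cons_of_mem _ h)
    · obtain ⟨P', h1, h2, h3⟩ := ih (q - r.length) (fun s hs => hruns s (List.mem_cons_of_mem _ hs))
      refine ⟨r :: P', ?_, by simp [h2], ?_⟩
      · simp only [List.flatten_cons]
        rw [List.eraseIdx_append_of_length_le (Nat.le_of_not_lt hq), h1]
      · intro s hs
        rcases List.mem_cons.mp hs with h | h
        · exact h ▸ hruns r (by simp)
        · exact h3 s h

theorem runsInto_eraseIdx {T : List α} {n q : ℕ} (h : RunsInto T n) :
    RunsInto (T.eraseIdx q) n := by
  obtain ⟨P, hfl, hlen, hruns⟩ := h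
  obtain ⟨P', h1, h2, h3⟩ := runs_eraseIdx P q hruns
  exact ⟨P', by rw [h1, hfl], by rw [h2, hlen], h3⟩

theorem dir_writes (d : Bool) (B J : List α) :
    Writes B J (dirRun d B J) (dirState d B J).1 (dirState d B J).2 := by
  cases d
  · simpa [dirRun, dirState, maxDecRun, decState, XD] using XD_writes (α := α) none B J
  · simpa [dirRun, dirState, maxIncRun, incState, XI] using XI_writes (α := α) none B J

theorem dir_isRun (d : Bool) (B J : List α) : IsRun (dirRun d B J) := by
  cases d
  · exact Or.inr (by simpa [dirRun, maxDecRun, XD] using XD_chain (α := α) none B J)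
  · exact Or.inl (by simpa [dirRun, maxIncRun, XI] using XI_chain (α := α) none B J)

theorem proper_writes {B J : List α} {P : List (List α)} {B' J' : List α}
    (h : ProperWrites B J P B' J') :
    Writes B J P.flatten B' J' ∧ ∀ r ∈ P, IsRun r := by
  induction h with
  | nil B J => exact ⟨Writes.nil B J, by simp⟩
  | step d B J P B' J' hB h ih =>
    refine ⟨?_, ?_⟩
    · simp only [List.flatten_cons]
      exact writes_append (dir_writes d B J) ih.1
    · intro s hs
      rcases List.mem_cons.mp hs with h' | h'
      · exact h' ▸ dir_isRun d B J
      · exact ih.2 s h'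


theorem key_inc :
    ∀ n : ℕ, ∀ (last? : Option α) (B J r T : List α) (k : ℕ),
      (r ++ T).length = n →
      Writes B J (r ++ T) [] [] →
      r.Chain' (· ≤ ·) →
      (∀ l ∈ last?, ∀ x ∈ r.head?, l ≤ x) →
      RunsInto T k →
      ∃ T', Writes B J ((XI last? B J).1 ++ T') [] [] ∧ RunsInto T' k := by
  intro n
  induction n using Nat.strong_induction_on with
  | _ n ih =>
    intro last? B J r T k hn hw hchain hhead hT
    cases hup : nextUp last? B with
    | none =>
      have hr : r = [] := by
        cases r with
        | nil => rfl
        | cons a r₁ =>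
          exfalso
          rw [List.cons_append] at hw
          obtain ⟨i, hi, hBi, _⟩ := writes_cons_inv hw
          exact nextUp_none hup (hBi ▸ List.getElem_mem hi) (fun l hl => hhead l hl a rfl)
      refine ⟨T, ?_, hT⟩
      rw [XI_eq, hup]
      simpa [hr] using hw
    | some x0 =>
      obtain ⟨hx0B, hx0l, hx0min⟩ := nextUp_some hup
      obtain ⟨p, hp, hSp, hw'⟩ := writes_exchange _ _ _ x0 hw hx0B
      obtain ⟨i, hi, hBi, hrest⟩ := writes_cons_inv hw'
      have hpe : (B.eraseIdx i ++ J.take 1).Perm (B.erase x0 ++ J.take 1) := by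
        have := perm_eraseIdx_erase B i hi
        rw [hBi] at this
        exact this.append_right _
      obtain ⟨C', hC', w2⟩ := writes_perm hrest hpe
      rw [(hC'.symm).eq_nil] at w2
      have hhead0 : ∀ a ∈ r.head?, x0 ≤ a := by
        intro a ha
        cases r with
        | nil => simp at ha
        | cons b r₁ =>
          simp only [List.head?_cons, Option.mem_def, Option.some.injEq] at ha
          subst ha
          rw [List.cons_append] at hw
          obtain ⟨i₀, hi₀, hBi₀, _⟩ := writes_cons_inv hw
          exact hx0min b (hBi₀ ▸ List.getElem_mem hi₀) (fun l hl => hhead l hl b rfl)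
      have hlen' : ((r ++ T).eraseIdx p).length = n - 1 := by
        rw [List.length_eraseIdx, if_pos hp, hn]
      have hnpos : 1 ≤ n := by rw [← hn]; omega
      by_cases hpr : p < r.length
      · have hsplit : (r ++ T).eraseIdx p = r.eraseIdx p ++ T :=
          List.eraseIdx_append_of_lt_length hpr T
        have hchain' : (r.eraseIdx p).Chain' (· ≤ ·) :=
          hchain.sublist (List.eraseIdx_sublist r p)
        have hhead' : ∀ l ∈ (some x0 : Option α), ∀ a ∈ (r.eraseIdx p).head?, l ≤ a := by
          intro l hl a ha
          simp only [Option.mem_def, Option.some.injEq] at hl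
          subst hl
          cases r with
          | nil => simp at ha
          | cons b r₁ =>
            cases p with
            | zero =>
              simp only [List.eraseIdx_cons_zero] at ha
              exact le_trans (hhead0 b rfl) ((List.isChain_cons.mp hchain).1 a ha)
            | succ q =>
              simp only [List.eraseIdx_cons_succ, List.head?_cons, Option.mem_def,
                Option.some.injEq] at ha
              exact ha ▸ hhead0 b rfl
        rw [hsplit] at w2
        obtain ⟨T', w3, hT'⟩ := ih (n - 1) (by omega) (some x0) (B.erase x0 ++ J.take 1)
          (J.drop 1) (r.eraseIdx p) T k (by rw [← hsplit, hlen']) w2 hchain' hhead' hT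
        refine ⟨T', ?_, hT'⟩
        rw [XI_eq, hup]
        simp only [List.cons_append]
        have hj : B.idxOf x0 < B.length := List.idxOf_lt_length_iff.mpr hx0B
        have := Writes.step B J (B.idxOf x0) _ _ _ hj
          (by rw [← List.erase_eq_eraseIdx_of_idxOf rfl]; exact w3)
        simpa [List.getElem_idxOf] using this
      · have hple : r.length ≤ p := Nat.le_of_not_lt hpr
        have hsplit : (r ++ T).eraseIdx p = r ++ T.eraseIdx (p - r.length) :=
          List.eraseIdx_append_of_length_le hple T
        have hhead' : ∀ l ∈ (some x0 : Option α), ∀ a ∈ r.head?, l ≤ a := by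
          intro l hl a ha
          simp only [Option.mem_def, Option.some.injEq] at hl
          exact hl ▸ hhead0 a ha
        rw [hsplit] at w2
        obtain ⟨T', w3, hT'⟩ := ih (n - 1) (by omega) (some x0) (B.erase x0 ++ J.take 1)
          (J.drop 1) r (T.eraseIdx (p - r.length)) k (by rw [← hsplit, hlen']) w2 hchain
          hhead' (runsInto_eraseIdx hT)
        refine ⟨T', ?_, hT'⟩
        rw [XI_eq, hup]
        simp only [List.cons_append]
        have hj : B.idxOf x0 < B.length := List.idxOf_lt_length_iff.mpr hx0B
        have := Writes.step B J (B.idxOf x0) _ _ _ hj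
          (by rw [← List.erase_eq_eraseIdx_of_idxOf rfl]; exact w3)
        simpa [List.getElem_idxOf] using this

theorem key_dec :
    ∀ n : ℕ, ∀ (last? : Option α) (B J r T : List α) (k : ℕ),
      (r ++ T).length = n →
      Writes B J (r ++ T) [] [] →
      r.Chain' (· ≥ ·) →
      (∀ l ∈ last?, ∀ x ∈ r.head?, x ≤ l) →
      RunsInto T k →
      ∃ T', Writes B J ((XD last? B J).1 ++ T') [] [] ∧ RunsInto T' k := by
  intro n
  induction n using Nat.strong_induction_on with
  | _ n ih =>
    intro last? B J r T k hn hw hchain hhead hT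
    cases hup : nextDown last? B with
    | none =>
      have hr : r = [] := by
        cases r with
        | nil => rfl
        | cons a r₁ =>
          exfalso
          rw [List.cons_append] at hw
          obtain ⟨i, hi, hBi, _⟩ := writes_cons_inv hw
          exact nextDown_none hup (hBi ▸ List.getElem_mem hi) (fun l hl => hhead l hl a rfl)
      refine ⟨T, ?_, hT⟩
      rw [XD_eq, hup]
      simpa [hr] using hw
    | some x0 =>
      obtain ⟨hx0B, hx0l, hx0max⟩ := nextDown_some hup
      obtain ⟨p, hp, hSp, hw'⟩ := writes_exchange _ _ _ x0 hw hx0B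
      obtain ⟨i, hi, hBi, hrest⟩ := writes_cons_inv hw'
      have hpe : (B.eraseIdx i ++ J.take 1).Perm (B.erase x0 ++ J.take 1) := by
        have := perm_eraseIdx_erase B i hi
        rw [hBi] at this
        exact this.append_right _
      obtain ⟨C', hC', w2⟩ := writes_perm hrest hpe
      rw [(hC'.symm).eq_nil] at w2
      have hhead0 : ∀ a ∈ r.head?, a ≤ x0 := by
        intro a ha
        cases r with
        | nil => simp at ha
        | cons b r₁ =>
          simp only [List.head?_cons, Option.mem_def, Option.some.injEq] at ha
          subst ha
          rw [List.cons_append] at hw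
          obtain ⟨i₀, hi₀, hBi₀, _⟩ := writes_cons_inv hw
          exact hx0max b (hBi₀ ▸ List.getElem_mem hi₀) (fun l hl => hhead l hl b rfl)
      have hlen' : ((r ++ T).eraseIdx p).length = n - 1 := by
        rw [List.length_eraseIdx, if_pos hp, hn]
      have hnpos : 1 ≤ n := by rw [← hn]; omega
      by_cases hpr : p < r.length
      · have hsplit : (r ++ T).eraseIdx p = r.eraseIdx p ++ T :=
          List.eraseIdx_append_of_lt_length hpr T
        have hchain' : (r.eraseIdx p).Chain' (· ≥ ·) :=
          hchain.sublist (List.eraseIdx_sublist r p)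
        have hhead' : ∀ l ∈ (some x0 : Option α), ∀ a ∈ (r.eraseIdx p).head?, a ≤ l := by
          intro l hl a ha
          simp only [Option.mem_def, Option.some.injEq] at hl
          subst hl
          cases r with
          | nil => simp at ha
          | cons b r₁ =>
            cases p with
            | zero =>
              simp only [List.eraseIdx_cons_zero] at ha
              exact le_trans ((List.isChain_cons.mp hchain).1 a ha) (hhead0 b rfl)
            | succ q =>
              simp only [List.eraseIdx_cons_succ, List.head?_cons, Option.mem_def,
                Option.some.injEq] at ha
              exact ha ▸ hhead0 b rfl
        rw [hsplit] at w2
        obtain ⟨T', w3, hT'⟩ := ih (n - 1) (by omega) (some x0) (B.erase x0 ++ J.take 1)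
          (J.drop 1) (r.eraseIdx p) T k (by rw [← hsplit, hlen']) w2 hchain' hhead' hT
        refine ⟨T', ?_, hT'⟩
        rw [XD_eq, hup]
        simp only [List.cons_append]
        have hj : B.idxOf x0 < B.length := List.idxOf_lt_length_iff.mpr hx0B
        have := Writes.step B J (B.idxOf x0) _ _ _ hj
          (by rw [← List.erase_eq_eraseIdx_of_idxOf rfl]; exact w3)
        simpa [List.getElem_idxOf] using this
      · have hple : r.length ≤ p := Nat.le_of_not_lt hpr
        have hsplit : (r ++ T).eraseIdx p = r ++ T.eraseIdx (p - r.length) :=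
          List.eraseIdx_append_of_length_le hple T
        have hhead' : ∀ l ∈ (some x0 : Option α), ∀ a ∈ r.head?, a ≤ l := by
          intro l hl a ha
          simp only [Option.mem_def, Option.some.injEq] at hl
          exact hl ▸ hhead0 a ha
        rw [hsplit] at w2
        obtain ⟨T', w3, hT'⟩ := ih (n - 1) (by omega) (some x0) (B.erase x0 ++ J.take 1)
          (J.drop 1) r (T.eraseIdx (p - r.length)) k (by rw [← hsplit, hlen']) w2 hchain
          hhead' (runsInto_eraseIdx hT)
        refine ⟨T', ?_, hT'⟩
        rw [XD_eq, hup]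
        simp only [List.cons_append]
        have hj : B.idxOf x0 < B.length := List.idxOf_lt_length_iff.mpr hx0B
        have := Writes.step B J (B.idxOf x0) _ _ _ hj
          (by rw [← List.erase_eq_eraseIdx_of_idxOf rfl]; exact w3)
        simpa [List.getElem_idxOf] using this


theorem outer : ∀ (k : ℕ) (B J S : List α), Writes B J S [] [] → RunsInto S k →
    ∃ P : List (List α), ProperWrites B J P [] [] ∧ P.length ≤ k := by
  intro k
  induction k with
  | zero =>
    intro B J S hw hR
    obtain ⟨P, hfl, hlen, _⟩ := hR
    have hP : P = [] := List.length_eq_zero_iff.mp hlen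
    have hS : S = [] := by rw [← hfl, hP]; rfl
    subst hS
    obtain ⟨hB, hJ⟩ := writes_nil_inv hw
    rw [← hB, ← hJ]
    exact ⟨[], ProperWrites.nil _ _, le_refl 0⟩
  | succ k ihk =>
    intro B J S hw hR
    obtain ⟨P, hfl, hlen, hruns⟩ := hR
    cases P with
    | nil => simp at hlen
    | cons r P₁ =>
      have hlen1 : P₁.length = k := by simpa using hlen
      have hfl' : S = r ++ P₁.flatten := by rw [← hfl]; rfl
      rcases eq_or_ne r [] with hr | hr
      · have hrk : RunsInto S k :=
          ⟨P₁, by rw [← hfl, hr]; simp, hlen1, fun s hs => hruns s (List.mem_cons_of_mem _ hs)⟩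
        obtain ⟨P', h1, h2⟩ := ihk B J S hw hrk
        exact ⟨P', h1, by omega⟩
      · have hwrt : Writes B J (r ++ P₁.flatten) [] [] := by rw [← hfl']; exact hw
        have hBne : B ≠ [] := by
          have hwrt' := hwrt
          cases r with
          | nil => exact absurd rfl hr
          | cons a r₁ =>
            rw [List.cons_append] at hwrt'
            obtain ⟨i, hi, _, _⟩ := writes_cons_inv hwrt'
            exact List.ne_nil_of_length_pos (by omega)
        have hRT : RunsInto P₁.flatten k :=
          ⟨P₁, rfl, hlen1, fun s hs => hruns s (List.mem_cons_of_mem _ hs)⟩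
        rcases hruns r (by simp) with hinc | hdec
        · obtain ⟨T', w', hT'⟩ :=
            key_inc _ none B J r P₁.flatten k rfl hwrt hinc (by simp) hRT
          obtain ⟨C, K, w1, wtail⟩ := writes_split w'
          have wX := XI_writes (α := α) none B J
          obtain ⟨hK1, hp1⟩ := writes_drop w1
          obtain ⟨hK2, hp2⟩ := writes_drop wX
          have hKeq : K = (XI none B J).2.2 := by rw [hK1, hK2]
          have hCperm : C.Perm (XI none B J).2.1 := by
            have hpp := hp1.trans hp2.symm
            refine Multiset.coe_eq_coe.mp ?_
            have hm := Multiset.coe_eq_coe.mpr hpp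
            rw [← Multiset.coe_add, ← Multiset.coe_add] at hm
            exact add_right_cancel hm
          obtain ⟨C'', hC'', wtail'⟩ := writes_perm wtail hCperm
          rw [(hC''.symm).eq_nil] at wtail'
          rw [hKeq] at wtail'
          obtain ⟨P', hP', hlenP'⟩ := ihk (XI none B J).2.1 (XI none B J).2.2 T' wtail' hT'
          refine ⟨dirRun true B J :: P', ?_, by simpa using Nat.succ_le_succ hlenP'⟩
          refine ProperWrites.step true B J P' [] [] hBne ?_
          simpa [dirState, incState, XI] using hP'
        · obtain ⟨T', w', hT'⟩ :=
            key_dec _ none B J r P₁.flatten k rfl hwrt hdec (by simp) hRT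
          obtain ⟨C, K, w1, wtail⟩ := writes_split w'
          have wX := XD_writes (α := α) none B J
          obtain ⟨hK1, hp1⟩ := writes_drop w1
          obtain ⟨hK2, hp2⟩ := writes_drop wX
          have hKeq : K = (XD none B J).2.2 := by rw [hK1, hK2]
          have hCperm : C.Perm (XD none B J).2.1 := by
            have hpp := hp1.trans hp2.symm
            refine Multiset.coe_eq_coe.mp ?_
            have hm := Multiset.coe_eq_coe.mpr hpp
            rw [← Multiset.coe_add, ← Multiset.coe_add] at hm
            exact add_right_cancel hm
          obtain ⟨C'', hC'', wtail'⟩ := writes_perm wtail hCperm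
          rw [(hC''.symm).eq_nil] at wtail'
          rw [hKeq] at wtail'
          obtain ⟨P', hP', hlenP'⟩ := ihk (XD none B J).2.1 (XD none B J).2.2 T' wtail' hT'
          refine ⟨dirRun false B J :: P', ?_, by simpa using Nat.succ_le_succ hlenP'⟩
          refine ProperWrites.step false B J P' [] [] hBne ?_
          simpa [dirState, decState, XD] using hP'


/-- Extend a permutation of `Fin m` to `Fin (m+1)` sending `0` to `iF`. -/
def extendPerm {m : ℕ} (σ' : Fin m ≃ Fin m) (iF : Fin (m + 1)) : Fin (m + 1) ≃ Fin (m + 1) :=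
  (finSuccEquiv m).trans ((Equiv.optionCongr σ').trans (finSuccEquiv' iF).symm)

theorem extendPerm_zero {m : ℕ} (σ' : Fin m ≃ Fin m) (iF : Fin (m + 1)) :
    extendPerm σ' iF 0 = iF := by
  simp [extendPerm, finSuccEquiv_zero, finSuccEquiv'_symm_none]

theorem extendPerm_succ {m : ℕ} (σ' : Fin m ≃ Fin m) (iF : Fin (m + 1)) (j : Fin m) :
    extendPerm σ' iF j.succ = iF.succAbove (σ' j) := by
  simp [extendPerm, finSuccEquiv_succ, finSuccEquiv'_symm_some]

theorem succAbove_val {m : ℕ} (iF : Fin (m + 1)) (j : Fin m) :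
    ((iF.succAbove j : Fin (m + 1)) : ℕ) =
      if (j : ℕ) < (iF : ℕ) then (j : ℕ) else (j : ℕ) + 1 := by
  split_ifs with h
  · rw [Fin.succAbove_of_castSucc_lt _ _ (by rw [Fin.lt_def]; simpa)]
    simp
  · rw [Fin.succAbove_of_le_castSucc _ _ (by rw [Fin.le_def]; simpa using h)]
    simp

theorem restrict_spec {m : ℕ} (σ : Fin (m + 1) ≃ Fin (m + 1)) (iF : Fin (m + 1))
    (h0 : σ 0 = iF) :
    ∃ σ' : Fin m ≃ Fin m, ∀ t : Fin m, iF.succAbove (σ' t) = σ t.succ := by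
  set e : Option (Fin m) ≃ Option (Fin m) :=
    ((finSuccEquiv m).symm.trans σ).trans (finSuccEquiv' iF) with he
  have hnone : e none = none := by
    simp only [he, Equiv.trans_apply, finSuccEquiv_symm_none, h0]
    exact finSuccEquiv'_at iF
  refine ⟨e.removeNone, fun t => ?_⟩
  have hne : σ t.succ ≠ iF := by
    rw [← h0]
    intro hc
    exact Fin.succ_ne_zero t (σ.injective hc)
  obtain ⟨j, hj⟩ := Fin.exists_succAbove_eq hne
  have hej : e (some t) = some j := by
    simp only [he, Equiv.trans_apply, finSuccEquiv_symm_some]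
    rw [← hj, finSuccEquiv'_succAbove]
  have hs := Equiv.removeNone_some e ⟨j, hej⟩
  rw [hej] at hs
  have hrj : e.removeNone t = j := Option.some_inj.mp hs
  rw [hrj, hj]

theorem writes_toPerm {B J S : List α} (h : Writes B J S [] []) :
    S.length = (B ++ J).length ∧
      ∃ σ : Fin (B ++ J).length ≃ Fin (B ++ J).length,
        ∀ t : Fin (B ++ J).length,
          S[(t : ℕ)]? = (B ++ J)[(σ t : ℕ)]? ∧ (σ t : ℕ) < B.length + (t : ℕ) := by
  induction S generalizing B J with
  | nil =>
    obtain ⟨hB, hJ⟩ := writes_nil_inv h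
    subst hB; subst hJ
    exact ⟨rfl, Equiv.refl _, fun t => t.elim0⟩
  | cons x S₁ ih =>
    obtain ⟨i, hi, hBi, hrest⟩ := writes_cons_inv h
    obtain ⟨hlen₁, σ', hσ'⟩ := ih hrest
    have hKK : (B.eraseIdx i ++ J.take 1) ++ J.drop 1 = (B ++ J).eraseIdx i := by
      rw [List.append_assoc, List.take_append_drop, List.eraseIdx_append_of_lt_length hi]
    have hiN : i < (B ++ J).length := by
      simp only [List.length_append]; omega
    have hm : (B ++ J).length = ((B.eraseIdx i ++ J.take 1) ++ J.drop 1).length + 1 := by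
      rw [hKK, List.length_eraseIdx, if_pos hiN]; omega
    have hB2len : (B.eraseIdx i ++ J.take 1).length ≤ B.length := by
      simp only [List.length_append, List.length_eraseIdx, List.length_take, if_pos hi]
      omega
    set iF : Fin (((B.eraseIdx i ++ J.take 1) ++ J.drop 1).length + 1) := ⟨i, by omega⟩
      with hiF
    refine ⟨by rw [List.length_cons, hlen₁]; exact hm.symm,
      (finCongr hm).trans ((extendPerm σ' iF).trans (finCongr hm.symm)), fun t => ?_⟩
    have hσval : ∀ u : Fin (((B.eraseIdx i ++ J.take 1) ++ J.drop 1).length + 1),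
        ((t : ℕ) = (u : ℕ)) →
        (((finCongr hm).trans ((extendPerm σ' iF).trans (finCongr hm.symm))) t : ℕ) =
          (extendPerm σ' iF u : ℕ) := by
      intro u hu
      have hcu : finCongr hm t = u := Fin.ext (by simpa using hu)
      simp [hcu]
    rcases hts : (t : ℕ) with _ | s
    · have h0 := hσval 0 (by simp [hts])
      rw [extendPerm_zero] at h0
      have hiFv : (iF : ℕ) = i := rfl
      rw [h0, hiFv]
      constructor
      · rw [List.getElem?_cons_zero, List.getElem?_eq_getElem hiN,
          List.getElem_append_left hi, hBi]
      · omega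
    · have hs' : s < ((B.eraseIdx i ++ J.take 1) ++ J.drop 1).length := by
        have := t.2; omega
      have hval := hσval (Fin.succ ⟨s, hs'⟩) (by simp [hts])
      rw [extendPerm_succ, succAbove_val] at hval
      obtain ⟨hge, hlt⟩ := hσ' ⟨s, hs'⟩
      have hge2 : ∀ k : ℕ, ((B.eraseIdx i ++ J.take 1) ++ J.drop 1)[k]? =
          ((B ++ J).eraseIdx i)[k]? := fun k => by rw [hKK]
      have hjm := (σ' ⟨s, hs'⟩).2
      constructor
      · rw [List.getElem?_cons_succ, hge, hge2 _, List.getElem?_eraseIdx, hval]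
        by_cases hji : ((σ' ⟨s, hs'⟩ : _) : ℕ) < (iF : ℕ)
        · rw [if_pos hji, if_pos (by exact hji)]
        · rw [if_neg hji, if_neg (by exact hji)]
      · have hiFv : (iF : ℕ) = i := rfl
        rw [hval]
        have hlt2 : ((σ' ⟨s, hs'⟩ : _) : ℕ) < (B.eraseIdx i ++ J.take 1).length + s := by
          simpa using hlt
        by_cases hji : ((σ' ⟨s, hs'⟩ : _) : ℕ) < (iF : ℕ)
        · rw [if_pos hji]; rw [hiFv] at hji; omega
        · rw [if_neg hji]; omega

theorem perm_toWrites : ∀ (S B J : List α), S.length = (B ++ J).length →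
    (∃ σ : Fin (B ++ J).length ≃ Fin (B ++ J).length,
      ∀ t : Fin (B ++ J).length,
        S[(t : ℕ)]? = (B ++ J)[(σ t : ℕ)]? ∧ (σ t : ℕ) < B.length + (t : ℕ)) →
    Writes B J S [] [] := by
  intro S
  induction S with
  | nil =>
    intro B J hlen _
    simp only [List.length_nil, List.length_append] at hlen
    have hB : B = [] := List.length_eq_zero_iff.mp (by omega)
    have hJ : J = [] := List.length_eq_zero_iff.mp (by omega)
    subst hB; subst hJ
    exact Writes.nil [] []
  | cons x S₁ ih =>
    rintro B J hlen ⟨σ, hσ⟩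
    have hm0 : (0 : ℕ) < (B ++ J).length := by
      simp only [List.length_cons] at hlen; omega
    obtain ⟨hS0, hb0⟩ := hσ ⟨0, hm0⟩
    have hiB : ((σ ⟨0, hm0⟩ : _) : ℕ) < B.length := by simpa using hb0
    have hiN : ((σ ⟨0, hm0⟩ : _) : ℕ) < (B ++ J).length := by
      simp only [List.length_append]; omega
    have hx : B[((σ ⟨0, hm0⟩ : _) : ℕ)]'hiB = x := by
      rw [List.getElem?_cons_zero, List.getElem?_eq_getElem hiN] at hS0
      have h2 := Option.some_inj.mp hS0
      rw [List.getElem_append_left hiB] at h2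
      exact h2.symm
    have hKK : (B.eraseIdx ((σ ⟨0, hm0⟩ : _) : ℕ) ++ J.take 1) ++ J.drop 1 =
        (B ++ J).eraseIdx ((σ ⟨0, hm0⟩ : _) : ℕ) := by
      rw [List.append_assoc, List.take_append_drop, List.eraseIdx_append_of_lt_length hiB]
    have hlen₂ : S₁.length =
        ((B.eraseIdx ((σ ⟨0, hm0⟩ : _) : ℕ) ++ J.take 1) ++ J.drop 1).length := by
      rw [hKK, List.length_eraseIdx, if_pos hiN]
      simp only [List.length_cons] at hlen
      omega
    have hm : (B ++ J).length = S₁.length + 1 := by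
      simp only [List.length_cons] at hlen; omega
    have hicast : ((σ ⟨0, hm0⟩ : _) : ℕ) < S₁.length + 1 := by omega
    have h0 : ((finCongr hm.symm).trans (σ.trans (finCongr hm))) 0 =
        ⟨((σ ⟨0, hm0⟩ : _) : ℕ), hicast⟩ := by
      apply Fin.ext
      have h00 : (finCongr hm.symm) (0 : Fin (S₁.length + 1)) = ⟨0, hm0⟩ := Fin.ext (by simp)
      simp [h00]
    obtain ⟨σ', hσ'⟩ := restrict_spec ((finCongr hm.symm).trans (σ.trans (finCongr hm)))
      ⟨((σ ⟨0, hm0⟩ : _) : ℕ), hicast⟩ h0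
    have hw₂ : Writes (B.eraseIdx ((σ ⟨0, hm0⟩ : _) : ℕ) ++ J.take 1) (J.drop 1) S₁ [] [] := by
      refine ih _ _ hlen₂
        ⟨(finCongr hlen₂.symm).trans (σ'.trans (finCongr hlen₂)), fun t => ?_⟩
      have htm : (t : ℕ) < S₁.length := by
        have := t.2; omega
      have hjval : ((((finCongr hlen₂.symm).trans (σ'.trans (finCongr hlen₂))) t : _) : ℕ) =
          ((σ' ⟨(t : ℕ), htm⟩ : _) : ℕ) := by
        have hc : (finCongr hlen₂.symm) t = ⟨(t : ℕ), htm⟩ := Fin.ext (by simp)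
        simp [hc]
      have hsucc := hσ' ⟨(t : ℕ), htm⟩
      have htsN : (t : ℕ) + 1 < (B ++ J).length := by omega
      have hsuccval : ((((finCongr hm.symm).trans (σ.trans (finCongr hm)))
          (Fin.succ ⟨(t : ℕ), htm⟩) : _) : ℕ) =
          ((σ ⟨(t : ℕ) + 1, htsN⟩ : _) : ℕ) := by
        have hc : (finCongr hm.symm) (Fin.succ ⟨(t : ℕ), htm⟩) = ⟨(t : ℕ) + 1, htsN⟩ :=
          Fin.ext (by simp)
        simp [hc]
      have huval : ((σ ⟨(t : ℕ) + 1, htsN⟩ : _) : ℕ) =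
          if ((σ' ⟨(t : ℕ), htm⟩ : _) : ℕ) < ((σ ⟨0, hm0⟩ : _) : ℕ)
          then ((σ' ⟨(t : ℕ), htm⟩ : _) : ℕ) else ((σ' ⟨(t : ℕ), htm⟩ : _) : ℕ) + 1 := by
        rw [← hsuccval, ← hsucc, succAbove_val]
      obtain ⟨hg, hb⟩ := hσ ⟨(t : ℕ) + 1, htsN⟩
      rw [List.getElem?_cons_succ] at hg
      have hjm := (σ' ⟨(t : ℕ), htm⟩).2
      have hlB2 : (B.eraseIdx ((σ ⟨0, hm0⟩ : _) : ℕ)).length = B.length - 1 := by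
        rw [List.length_eraseIdx, if_pos hiB]
      have hlT : (List.take 1 J).length = min 1 J.length := List.length_take
      have hgoal2 : ∀ k : ℕ, ((B.eraseIdx ((σ ⟨0, hm0⟩ : _) : ℕ) ++ J.take 1) ++ J.drop 1)[k]? =
          ((B ++ J).eraseIdx ((σ ⟨0, hm0⟩ : _) : ℕ))[k]? := fun k => by rw [hKK]
      constructor
      · rw [hjval, hgoal2 _, List.getElem?_eraseIdx, hg, huval]
        by_cases hji : ((σ' ⟨(t : ℕ), htm⟩ : _) : ℕ) < ((σ ⟨0, hm0⟩ : _) : ℕ)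
        · rw [if_pos hji, if_pos hji]
        · rw [if_neg hji, if_neg hji]
      · rw [hjval]
        have hb' : ((σ ⟨(t : ℕ) + 1, htsN⟩ : _) : ℕ) < B.length + ((t : ℕ) + 1) := by
          simpa using hb
        have hlm : S₁.length =
            ((B.eraseIdx ((σ ⟨0, hm0⟩ : _) : ℕ) ++ J.take 1) ++ J.drop 1).length := hlen₂
        simp only [List.length_append, List.length_drop, hlB2, hlT] at hlm
        by_cases hji : ((σ' ⟨(t : ℕ), htm⟩ : _) : ℕ) < ((σ ⟨0, hm0⟩ : _) : ℕ)
        · rw [huval, if_pos hji] at hb'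
          simp only [List.length_append, hlB2, hlT]
          omega
        · rw [huval, if_neg hji] at hb'
          simp only [List.length_append, hlB2, hlT]
          omega
    have hstep := Writes.step B J ((σ ⟨0, hm0⟩ : _) : ℕ) S₁ [] [] hiB hw₂
    rwa [hx] at hstep

theorem feas_of_writes {M : ℕ} {I S : List α} (h : Writes (I.take M) (I.drop M) S [] []) :
    IsFeasibleOutput M I S := by
  have hI : I.take M ++ I.drop M = I := List.take_append_drop M I
  have e : (I.take M ++ I.drop M).length = I.length := by rw [hI]
  have hg : ∀ k : ℕ, (I.take M ++ I.drop M)[k]? = I[k]? := fun k => by rw [hI]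
  obtain ⟨hlen, σ, hσ⟩ := writes_toPerm h
  refine ⟨by rw [hlen, e], (finCongr e.symm).trans (σ.trans (finCongr e)), fun t => ?_⟩
  have ht' : (t : ℕ) < (I.take M ++ I.drop M).length := by rw [e]; exact t.2
  have hvt : ((((finCongr e.symm).trans (σ.trans (finCongr e))) t : _) : ℕ) =
      ((σ ⟨(t : ℕ), ht'⟩ : _) : ℕ) := by
    have hc : finCongr e.symm t = ⟨(t : ℕ), ht'⟩ := Fin.ext (by simp)
    simp [hc]
  obtain ⟨h1, h2⟩ := hσ ⟨(t : ℕ), ht'⟩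
  constructor
  · rw [hvt, ← hg]
    exact h1
  · have h3 : (I.take M).length ≤ M := by
      simp only [List.length_take]
      exact min_le_left _ _
    rw [hvt]
    simp only at h2
    omega

theorem writes_of_feas {M : ℕ} {I S : List α} (h : IsFeasibleOutput M I S) :
    Writes (I.take M) (I.drop M) S [] [] := by
  have hI : I.take M ++ I.drop M = I := List.take_append_drop M I
  have e : (I.take M ++ I.drop M).length = I.length := by rw [hI]
  have hg : ∀ k : ℕ, (I.take M ++ I.drop M)[k]? = I[k]? := fun k => by rw [hI]
  obtain ⟨hlen, σ, hσ⟩ := h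
  apply perm_toWrites S _ _ (by rw [hlen]; exact e.symm)
  refine ⟨(finCongr e).trans (σ.trans (finCongr e.symm)), fun t => ?_⟩
  have ht' : (t : ℕ) < I.length := by rw [← e]; exact t.2
  have hvt : ((((finCongr e).trans (σ.trans (finCongr e.symm))) t : _) : ℕ) =
      ((σ ⟨(t : ℕ), ht'⟩ : _) : ℕ) := by
    have hc : finCongr e t = ⟨(t : ℕ), ht'⟩ := Fin.ext (by simp)
    simp [hc]
  obtain ⟨h1, h2⟩ := hσ ⟨(t : ℕ), ht'⟩
  constructor
  · rw [hvt, hg]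
    exact h1
  · have hb2 : ((σ ⟨(t : ℕ), ht'⟩ : _) : ℕ) < I.length := (σ _).2
    have h3 : (I.take M).length = min M I.length := by simp
    rw [hvt]
    simp only at h2
    omega


end RunGen

/-- For every input `I` and buffer size `M`, there is a proper `M`-feasible output
(one generated by writing maximal runs throughout) achieving `OPT M I` runs. -/
theorem stmt_2 {α : Type*} [LinearOrder α] (M : ℕ) (hM : 0 < M) (I : List α) :
    ∃ P : List (List α),
      ProperWrites (I.take M) (I.drop M) P [] [] ∧
      IsFeasibleOutput M I P.flatten ∧
      R P.flatten = OPT M I := by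
  have hfeasI : IsFeasibleOutput M I I :=
    ⟨rfl, Equiv.refl _, fun t => ⟨rfl, by simp only [Equiv.refl_apply]; omega⟩⟩
  have hflat : ∀ L : List α, (List.map (fun a => [a]) L).flatten = L := fun L => by
    induction L with
    | nil => rfl
    | cons a L ih => simp [ih]
  have hRunsI : RunsInto I I.length := by
    refine ⟨I.map (fun a => [a]), hflat I, by simp, ?_⟩
    · intro r hr
      simp only [List.mem_map] at hr
      obtain ⟨a, _, rfl⟩ := hr
      exact Or.inl (List.isChain_singleton a)
  have hne : Set.Nonempty {n | ∃ S : List α, IsFeasibleOutput M I S ∧ RunsInto S n} :=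
    ⟨I.length, I, hfeasI, hRunsI⟩
  have hopt := Nat.sInf_mem hne
  simp only [Set.mem_setOf_eq] at hopt
  obtain ⟨S, hfeas, hruns⟩ := hopt
  have hw : Writes (I.take M) (I.drop M) S [] [] := writes_of_feas hfeas
  obtain ⟨P, hP, hlenP⟩ := outer (OPT M I) _ _ S hw hruns
  have hfeasP : IsFeasibleOutput M I P.flatten := feas_of_writes (proper_writes hP).1
  refine ⟨P, hP, hfeasP, ?_⟩
  have hmemR : RunsInto P.flatten P.length := ⟨P, rfl, rfl, (proper_writes hP).2⟩
  have hmemR' : P.length ∈ {n | RunsInto P.flatten n} := hmemR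
  have hRle : R P.flatten ≤ P.length := Nat.sInf_le hmemR'
  have hneR : Set.Nonempty {n | RunsInto P.flatten n} := ⟨P.length, hmemR'⟩
  have hRmem : RunsInto P.flatten (R P.flatten) := Nat.sInf_mem hneR
  have hmemO : R P.flatten ∈ {n | ∃ S : List α, IsFeasibleOutput M I S ∧ RunsInto S n} :=
    ⟨P.flatten, hfeasP, hRmem⟩
  have hOle : OPT M I ≤ R P.flatten := Nat.sInf_le hmemO
  omega
end

section
/- Let I_1 and I_2 be inputs with I_2 a subsequence of I_1. Let S_1 and S_2 be proper outputs (with buffer size M) of I_1 and I_2 whose initial runs r_1 and r_2 are maximal runs in the same direction (both increasing or both decreasing). Let I_1' and I_2' be the unwritten-element sequences after r_1 and r_2 respectively. Then I_2' is a subsequence of I_1'. -/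
namespace RunGen
namespace Aux
set_option linter.unusedSectionVars false
open List
variable {β : Type*} [LinearOrder β]

/-- `Ilv G E B`: `B` is an interleaving of `G` and `E`. -/
inductive Ilv : List β → List β → List β → Prop
  | nil : Ilv [] [] []
  | left (a : β) {G E B : List β} : Ilv G E B → Ilv (a :: G) E (a :: B)
  | right (e : β) {G E B : List β} : Ilv G E B → Ilv G (e :: E) (e :: B)

lemma ilv_refl (L : List β) : Ilv L [] L := by
  induction L with
  | nil => exact .nil
  | cons a L ih => exact .left a ih

lemma ilv_nil_aux {G E B : List β} (h : Ilv G E B) : E = [] → G = B := by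
  induction h with
  | nil => intro; rfl
  | left a h ih => intro hE; rw [ih hE]
  | right e h ih => intro hE; cases hE

lemma ilv_nil {G B : List β} (h : Ilv G [] B) : G = B := ilv_nil_aux h rfl

lemma ilv_mem_right {G E B : List β} (h : Ilv G E B) : ∀ e ∈ E, e ∈ B := by
  induction h with
  | nil => intro e he; cases he
  | left a h ih => intro e he; exact List.mem_cons_of_mem _ (ih e he)
  | right e' h ih =>
    intro e he
    rcases List.mem_cons.1 he with rfl | he
    · exact List.mem_cons_self
    · exact List.mem_cons_of_mem _ (ih e he)

lemma ilv_append {G E B : List β} (h : Ilv G E B) (L : List β) :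
    Ilv (G ++ L) E (B ++ L) := by
  induction h with
  | nil => simpa using ilv_refl L
  | left a h ih => exact .left a ih
  | right e h ih => exact .right e ih

lemma ilv_erase {G E B : List β} (h : Ilv G E B) (x : β) :
    Ilv (G.erase x) E (B.erase x) ∨ Ilv G (E.erase x) (B.erase x) := by
  induction h with
  | nil => left; exact .nil
  | left a h ih =>
    by_cases hax : a = x
    · subst hax
      left
      rw [List.erase_cons_head, List.erase_cons_head]
      exact h
    · rw [List.erase_cons_tail (by simpa using hax), List.erase_cons_tail (by simpa using hax)]
      rcases ih with ih | ih
      · exact Or.inl (.left a ih)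
      · exact Or.inr (.left a ih)
  | right e h ih =>
    by_cases hex : e = x
    · subst hex
      right
      rw [List.erase_cons_head, List.erase_cons_head]
      exact h
    · rw [List.erase_cons_tail (by simpa using hex), List.erase_cons_tail (by simpa using hex)]
      rcases ih with ih | ih
      · exact Or.inl (.right e ih)
      · exact Or.inr (.right e ih)

lemma ilv_single {L : List β} {x : β} (hx : x ∈ L) : Ilv (L.erase x) [x] L := by
  induction L with
  | nil => cases hx
  | cons b L ih =>
    by_cases hbx : b = x
    · subst hbx
      rw [List.erase_cons_head]
      exact .right b (ilv_refl L)
    · rw [List.erase_cons_tail (by simpa using hbx)]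
      refine .left b (ih ?_)
      rcases List.mem_cons.1 hx with h | h
      · exact absurd h.symm hbx
      · exact h

lemma nextUp_none_iff {l? : Option β} {B : List β} :
    nextUp l? B = none ↔ ∀ b ∈ B, ∃ v ∈ l?, b < v := by
  cases l? with
  | none =>
    simp only [nextUp, List.min?_eq_none_iff]
    constructor
    · rintro rfl b hb; cases hb
    · intro h
      cases B with
      | nil => rfl
      | cons b B => obtain ⟨v, hv, -⟩ := h b (List.mem_cons_self); cases hv
  | some l =>
    rw [nextUp, List.min?_eq_none_iff, List.filter_eq_nil_iff]
    constructor
    · intro h b hb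
      exact ⟨l, rfl, by simpa [not_le] using h b hb⟩
    · rintro h b hb
      obtain ⟨v, hv, hbv⟩ := h b hb
      cases hv
      simp [not_le.2 hbv]

lemma nextUp_some_iff {l? : Option β} {B : List β} {x : β} :
    nextUp l? B = some x ↔
      x ∈ B ∧ (∀ v ∈ l?, v ≤ x) ∧ ∀ b ∈ B, (∀ v ∈ l?, v ≤ b) → x ≤ b := by
  have anti : Std.Antisymm (fun a b : β => a ≤ b) := ⟨fun _ _ h h' => _root_.le_antisymm h h'⟩
  cases l? with
  | none =>
    rw [nextUp, List.min?_eq_some_iff]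
    constructor
    · rintro ⟨h1, h2⟩
      exact ⟨h1, by rintro v ⟨⟩, fun b hb _ => h2 b hb⟩
    · rintro ⟨h1, -, h3⟩
      exact ⟨h1, fun b hb => h3 b hb (by rintro v ⟨⟩)⟩
  | some l =>
    rw [nextUp, List.min?_eq_some_iff]
    simp only [List.mem_filter, decide_eq_true_eq]
    constructor
    · rintro ⟨⟨h1, h2⟩, h3⟩
      refine ⟨h1, by rintro v ⟨⟩; exact h2, fun b hb hlb => h3 b ⟨hb, hlb l rfl⟩⟩
    · rintro ⟨h1, h2, h3⟩
      exact ⟨⟨h1, h2 l rfl⟩, fun b hb => h3 b hb.1 (by rintro v ⟨⟩; exact hb.2)⟩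

lemma nextUp_mem {l? : Option β} {B : List β} {x : β} (h : nextUp l? B = some x) : x ∈ B :=
  (nextUp_some_iff.1 h).1

lemma nextUp_ge {l? : Option β} {B : List β} {x : β} (h : nextUp l? B = some x) :
    ∀ v ∈ l?, v ≤ x := (nextUp_some_iff.1 h).2.1

lemma nextUp_min {l? : Option β} {B : List β} {x : β} (h : nextUp l? B = some x) :
    ∀ b ∈ B, (∀ v ∈ l?, v ≤ b) → x ≤ b := (nextUp_some_iff.1 h).2.2

lemma nextUp_nil (l? : Option β) : nextUp l? ([] : List β) = none := by
  cases l? <;> rfl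

/-- The unwritten-element sequence after running the maximal increasing run from
`(B, J)` with last written element `l?`. -/
def remFrom (l? : Option β) (B J : List β) : List β :=
  (incAux (B.length + J.length) l? B J).2.1 ++ (incAux (B.length + J.length) l? B J).2.2

lemma incAux_none {f : ℕ} {l? : Option β} {B J : List β} (h : nextUp l? B = none) :
    incAux f l? B J = ([], B, J) := by
  cases f <;> simp [incAux, h]

lemma incAux_some {f : ℕ} {l? : Option β} {B J : List β} {x : β} (h : nextUp l? B = some x) :
    incAux (f + 1) l? B J =
      (x :: (incAux f (some x) (B.erase x ++ J.take 1) (J.drop 1)).1,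
       (incAux f (some x) (B.erase x ++ J.take 1) (J.drop 1)).2) := by
  simp [incAux, h]

lemma step_length {B J : List β} {x : β} (hx : x ∈ B) :
    (B.erase x ++ J.take 1).length + (J.drop 1).length + 1 = B.length + J.length := by
  have hB : 0 < B.length := List.length_pos_iff.2 (List.ne_nil_of_mem hx)
  rw [List.length_append, List.length_erase_of_mem hx]
  cases J <;> simp <;> omega

lemma incAux_fuel : ∀ (f : ℕ) (l? : Option β) (B J : List β), B.length + J.length ≤ f →
    incAux f l? B J = incAux (B.length + J.length) l? B J := by
  intro f
  induction f with
  | zero =>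
    intro l? B J h
    have : B.length + J.length = 0 := by omega
    rw [this]
  | succ f ih =>
    intro l? B J h
    cases hx : nextUp l? B with
    | none => rw [incAux_none hx, incAux_none hx]
    | some x =>
      have hxB := nextUp_mem hx
      have hL := step_length (J := J) hxB
      rw [incAux_some hx, ← hL, incAux_some hx,
        ih _ _ _ (by omega)]

lemma rem_none {l? : Option β} {B J : List β} (h : nextUp l? B = none) :
    remFrom l? B J = B ++ J := by
  unfold remFrom
  rw [incAux_none h]

lemma rem_step {l? : Option β} {B J : List β} {x : β} (h : nextUp l? B = some x) :
    remFrom l? B J = remFrom (some x) (B.erase x ++ J.take 1) (J.drop 1) := by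
  have hxB := nextUp_mem h
  have hL := step_length (J := J) hxB
  unfold remFrom
  rw [← hL, incAux_some h]

lemma rem_sub : ∀ (n : ℕ) (l? : Option β) (B J : List β), B.length + J.length ≤ n →
    remFrom l? B J <+ B ++ J := by
  intro n
  induction n with
  | zero =>
    intro l? B J h
    have hB : B = [] := by
      cases B with
      | nil => rfl
      | cons a t => simp [Nat.succ_add] at h
    subst hB
    rw [rem_none (nextUp_nil l?)]
  | succ n ih =>
    intro l? B J h
    cases hx : nextUp l? B with
    | none => rw [rem_none hx]
    | some x =>
      have hxB := nextUp_mem hx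
      have hL := step_length (J := J) hxB
      rw [rem_step hx]
      refine (ih _ _ _ (by omega)).trans ?_
      rw [List.append_assoc, List.take_append_drop]
      exact (List.erase_sublist (a := x) (l := B)).append (List.Sublist.refl J)

lemma sub_erase_not_mem {L M : List β} {x : β} (h : L <+ M) (hx : x ∉ L) : L <+ M.erase x := by
  have h2 := h.erase x
  rwa [List.erase_of_not_mem hx] at h2

lemma cons_sub_decomp {a : β} {l r : List β} (h : a :: l <+ r) :
    ∃ C D, r = C ++ a :: D ∧ l <+ D := by
  induction r with
  | nil => cases h
  | cons b r ih =>
    cases h with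
    | cons _ h => obtain ⟨C, D, rfl, hD⟩ := ih h; exact ⟨b :: C, D, rfl, hD⟩
    | cons_cons _ h => exact ⟨[], r, rfl, h⟩

lemma ingest {J₁ : List β} {a : β} {rest : List β} {k : ℕ}
    (h : a :: rest <+ J₁.drop k) :
    ∃ k', k < k' ∧ k' ≤ J₁.length ∧ rest <+ J₁.drop k' ∧
      ∀ (B₀ X : List β), X <+ B₀ ++ J₁.take k → X ++ [a] <+ B₀ ++ J₁.take k' := by
  obtain ⟨C, D, hCD, hrest⟩ := cons_sub_decomp h
  have hkJ : k + C.length + 1 ≤ J₁.length := by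
    have := congrArg List.length hCD
    simp [List.length_drop] at this
    omega
  have hdrop : J₁.drop (k + C.length + 1) = D := by
    rw [show k + C.length + 1 = k + (C.length + 1) by omega, ← List.drop_drop, hCD]
    rw [show (C.length + 1) = C.length + 1 from rfl, List.drop_append]
    simp
  have htake : J₁.take (k + C.length + 1) = J₁.take k ++ (C ++ [a]) := by
    rw [show k + C.length + 1 = k + (C.length + 1) by omega, List.take_add, hCD,
      List.take_append]
    simp
  refine ⟨k + C.length + 1, by omega, hkJ, by rw [hdrop]; exact hrest, ?_⟩
  intro B₀ X hX
  rw [htake, ← List.append_assoc]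
  exact hX.append (List.sublist_append_right C [a])

lemma lemK : ∀ (n : ℕ) (l₁ : Option β) (B₁ J₁ D Jd : List β) (k : ℕ),
    B₁.length + J₁.length ≤ n → k ≤ J₁.length →
    D <+ B₁ ++ J₁.take k → Jd <+ J₁.drop k →
    (∀ d ∈ D, ∃ v ∈ l₁, d < v) →
    (Jd = [] ∨ B₁.length ≤ D.length) →
    D ++ Jd <+ remFrom l₁ B₁ J₁ := by
  intro n
  induction n with
  | zero =>
    intro l₁ B₁ J₁ D Jd k hn hk hD hJd hdead hsz
    have hB : B₁ = [] := by cases B₁ with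
      | nil => rfl
      | cons a t => simp [Nat.succ_add] at hn
    have hJ : J₁ = [] := by
      subst hB
      cases J₁ with
      | nil => rfl
      | cons a t => simp [Nat.succ_add] at hn
    subst hB; subst hJ
    have hD0 : D = [] := by simpa using hD
    have hJd0 : Jd = [] := by simpa using hJd
    subst hD0; subst hJd0
    simp [rem_none (nextUp_nil _)]
  | succ n ih =>
    intro l₁ B₁ J₁ D Jd k hn hk hD hJd hdead hsz
    cases hx : nextUp l₁ B₁ with
    | none =>
      rw [rem_none hx]
      have h1 : D ++ Jd <+ (B₁ ++ J₁.take k) ++ J₁.drop k := hD.append hJd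
      rwa [List.append_assoc, List.take_append_drop] at h1
    | some x =>
      have hxB := nextUp_mem hx
      have hxge := nextUp_ge hx
      have hL := step_length (J := J₁) hxB
      have hxD : x ∉ D := by
        intro hxD
        obtain ⟨v, hv, hlt⟩ := hdead x hxD
        exact absurd hlt (not_lt.2 (hxge v hv))
      rw [rem_step hx]
      have hdead' : ∀ d ∈ D, ∃ v ∈ some x, d < v := by
        intro d hd
        obtain ⟨v, hv, hlt⟩ := hdead d hd
        exact ⟨x, rfl, lt_of_lt_of_le hlt (hxge v hv)⟩
      cases k with
      | zero =>
        have hD' : D <+ B₁ := by simpa using hD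
        have hJd0 : Jd = [] := by
          rcases hsz with h | h
          · exact h
          · exfalso
            have hDB : D = B₁ := hD'.eq_of_length_le h
            rw [← hDB] at hxB
            exact hxD hxB
        subst hJd0
        have := ih (some x) (B₁.erase x ++ J₁.take 1) (J₁.drop 1) D [] 0
          (by omega) (by simp)
          (by
            simp only [List.take_zero, List.append_nil]
            exact (sub_erase_not_mem hD' hxD).trans (List.sublist_append_left _ _))
          (by simp) hdead' (Or.inl rfl)
        simpa using this
      | succ k₀ =>
        have hJne : J₁ ≠ [] := by
          intro h
          subst h
          simp at hk
        obtain ⟨j, J₁t, rfl⟩ := List.exists_cons_of_ne_nil hJne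
        have hD2 : D <+ (B₁.erase x ++ (j :: J₁t).take 1) ++ J₁t.take k₀ := by
          have h1 : D <+ (B₁ ++ (j :: J₁t).take (k₀ + 1)).erase x := sub_erase_not_mem hD hxD
          rw [List.erase_append_left _ hxB] at h1
          simpa [List.take_cons] using h1
        have := ih (some x) (B₁.erase x ++ (j :: J₁t).take 1) ((j :: J₁t).drop 1) D Jd k₀
          (by omega)
          (by simpa using hk)
          hD2
          (by simpa using hJd)
          hdead'
          (by
            rcases hsz with h | h
            · exact Or.inl h
            · refine Or.inr ?_
              have hB1 : 0 < B₁.length := List.length_pos_iff.2 (List.ne_nil_of_mem hxB)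
              simp only [List.length_append, List.length_erase_of_mem hxB]
              simp at h ⊢
              omega)
        exact this

lemma opt_mem_some {γ : Type*} {a b : γ} : a ∈ (some b : Option γ) ↔ a = b := by
  simp [Option.mem_def, eq_comm]

lemma pack2 {B₁ J₁ J₂ X : List β} {k : ℕ} (hX : X <+ B₁ ++ J₁.take k)
    (h3 : J₂ <+ J₁.drop k) (h0 : k ≤ J₁.length) :
    ∃ k', k' ≤ J₁.length ∧ (J₂ ≠ [] → 1 ≤ k') ∧
      X ++ J₂.take 1 <+ B₁ ++ J₁.take k' ∧ J₂.drop 1 <+ J₁.drop k' := by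
  cases J₂ with
  | nil => exact ⟨k, h0, by simp, by simpa using hX, by simp⟩
  | cons a rest =>
    obtain ⟨k', hkk', hk'J, hrest, hstep⟩ := ingest h3
    exact ⟨k', hk'J, fun _ => by omega, by simpa using hstep B₁ X hX, by simpa using hrest⟩

lemma shift_pack {B₀ J₁ J₂ X : List β} {k : ℕ} (hX : X <+ B₀ ++ J₁.take k)
    (h3 : J₂ <+ J₁.drop k) (h0 : k ≤ J₁.length) :
    ∃ k₃, k₃ ≤ (J₁.drop 1).length ∧
      X ++ J₂.take 1 <+ (B₀ ++ J₁.take 1) ++ (J₁.drop 1).take k₃ ∧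
      J₂.drop 1 <+ (J₁.drop 1).drop k₃ := by
  obtain ⟨k', hk'J, hpos, hsub, hdrop⟩ := pack2 hX h3 h0
  cases k' with
  | zero =>
    have hJ2 : J₂ = [] := by
      by_contra h
      exact absurd (hpos h) (by omega)
    subst hJ2
    refine ⟨0, by simp, ?_, by simp⟩
    simp only [List.take_nil, List.take_zero, List.append_nil] at hsub
    simp only [List.take_nil, List.append_nil, List.take_zero]
    exact hsub.trans (List.sublist_append_left _ _)
  | succ m =>
    refine ⟨m, by simp only [List.length_drop]; omega, ?_, ?_⟩
    · rw [List.append_assoc, ← List.take_add]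
      simpa [Nat.add_comm 1 m] using hsub
    · rw [List.drop_drop]
      simpa [Nat.add_comm 1 m] using hdrop

lemma main : ∀ (n : ℕ) (l₁ : Option β) (B₁ J₁ : List β) (l₂ : Option β) (B₂ J₂ : List β)
    (k : ℕ) (G E : List β),
    B₁.length + J₁.length + B₂.length + J₂.length ≤ n →
    k ≤ J₁.length →
    Ilv G E B₂ →
    G <+ B₁ ++ J₁.take k →
    J₂ <+ J₁.drop k →
    (∀ e ∈ E, (∀ v ∈ l₂, v ≤ e) ∧ ∃ u ∈ l₁, e ≤ u) →
    (∀ b ∈ B₂, (∃ v ∈ l₂, b < v) → ∃ u ∈ l₁, b < u) →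
    B₂.length ≤ B₁.length →
    (J₂ = [] ∨ B₂.length = B₁.length) →
    remFrom l₂ B₂ J₂ <+ remFrom l₁ B₁ J₁ := by
  intro n
  induction n with
  | zero =>
    intro l₁ B₁ J₁ l₂ B₂ J₂ k G E hn h0 h1 h2 h3 h4 h5 h6 h7
    have hB2 : B₂ = [] := List.length_eq_zero_iff.1 (by omega)
    have hJ2 : J₂ = [] := List.length_eq_zero_iff.1 (by omega)
    subst hB2; subst hJ2
    rw [rem_none (nextUp_nil l₂)]
    exact List.nil_sublist _
  | succ n ih =>
    intro l₁ B₁ J₁ l₂ B₂ J₂ k G E hn h0 h1 h2 h3 h4 h5 h6 h7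
    by_cases hA : ∃ y, nextUp l₂ B₂ = some y ∧ ∃ u ∈ l₁, y ≤ u
    · -- CASE 1 : step process 2 alone
      obtain ⟨y, hy2, u, hu, hyu⟩ := hA
      have hyB := nextUp_mem hy2
      have hyge := nextUp_ge hy2
      have hymin := nextUp_min hy2
      have hlB₂ : 0 < B₂.length := List.length_pos_iff.2 (List.ne_nil_of_mem hyB)
      rw [rem_step hy2]
      obtain ⟨G₀, E₀, hIlv₀, hG₀, hE₀sub⟩ :
          ∃ G₀ E₀, Ilv G₀ E₀ (B₂.erase y) ∧ G₀ <+ B₁ ++ J₁.take k ∧ ∀ e ∈ E₀, e ∈ E := by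
        rcases ilv_erase h1 y with hIG | hIE
        · exact ⟨G.erase y, E, hIG, List.erase_sublist.trans h2, fun e he => he⟩
        · exact ⟨G, E.erase y, hIE, h2, fun e he => List.erase_sublist.subset he⟩
      obtain ⟨k', hk'J, hpos, hsub, hdropp⟩ := pack2 hG₀ h3 h0
      have h4' : ∀ e ∈ E₀, (∀ v ∈ some y, v ≤ e) ∧ ∃ u' ∈ l₁, e ≤ u' := by
        intro e he
        obtain ⟨he2, hE1⟩ := h4 e (hE₀sub e he)
        refine ⟨?_, hE1⟩
        intro v hv
        rw [opt_mem_some.1 hv]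
        exact hymin e (ilv_mem_right h1 e (hE₀sub e he)) he2
      have h5' : ∀ b ∈ B₂.erase y ++ J₂.take 1,
          (∃ v ∈ some y, b < v) → ∃ u' ∈ l₁, b < u' := by
        intro b hb hbv
        obtain ⟨v, hv, hblt⟩ := hbv
        rw [opt_mem_some.1 hv] at hblt
        rcases List.mem_append.1 hb with hb | hb
        · have hbB : b ∈ B₂ := (List.erase_sublist (a := y) (l := B₂)).subset hb
          by_cases hcand : ∀ w ∈ l₂, w ≤ b
          · exact absurd hblt (not_lt.2 (hymin b hbB hcand))
          · push_neg at hcand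
            obtain ⟨w, hw, hwb⟩ := hcand
            exact h5 b hbB ⟨w, hw, hwb⟩
        · exact ⟨u, hu, lt_of_lt_of_le hblt hyu⟩
      refine ih l₁ B₁ J₁ (some y) (B₂.erase y ++ J₂.take 1) (J₂.drop 1) k'
        (G₀ ++ J₂.take 1) E₀ ?_ hk'J ?_ hsub hdropp h4' h5' ?_ ?_
      · -- measure
        have : (B₂.erase y).length = B₂.length - 1 := by
          rw [List.length_erase_of_mem hyB]
        cases J₂ <;> simp [this] at hn ⊢ <;> omega
      · exact ilv_append hIlv₀ _
      · -- length ≤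
        have : (B₂.erase y).length = B₂.length - 1 := by
          rw [List.length_erase_of_mem hyB]
        cases J₂ <;> simp [this] <;> omega
      · -- length eq or nil
        cases hJ₂ : J₂ with
        | nil => exact Or.inl (by simp)
        | cons a rest =>
          rcases h7 with h | h
          · rw [hJ₂] at h; cases h
          · refine Or.inr ?_
            have : (B₂.erase y).length = B₂.length - 1 := by
              rw [List.length_erase_of_mem hyB]
            simp [this]
            omega
    · -- not CASE 1
      have hE : E = [] := by
        by_contra hEne
        obtain ⟨e, he⟩ := List.exists_mem_of_ne_nil E hEne
        obtain ⟨he2, u, hu, heu⟩ := h4 e he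
        have heB := ilv_mem_right h1 e he
        cases hy : nextUp l₂ B₂ with
        | none =>
          obtain ⟨v, hv, hlt⟩ := nextUp_none_iff.1 hy e heB
          exact absurd hlt (not_lt.2 (he2 v hv))
        | some y =>
          exact hA ⟨y, hy, u, hu, le_trans (nextUp_min hy e heB he2) heu⟩
      subst hE
      have hGB : B₂ = G := (ilv_nil h1).symm
      subst hGB
      cases hx1 : nextUp l₁ B₁ with
      | none =>
        rw [rem_none hx1]
        refine (rem_sub (B₂.length + J₂.length) l₂ B₂ J₂ le_rfl).trans ?_
        have hh := h2.append h3
        rwa [List.append_assoc, List.take_append_drop] at hh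
      | some x =>
        have hxB := nextUp_mem hx1
        have hxge := nextUp_ge hx1
        have hxmin := nextUp_min hx1
        have hlB₁ : 0 < B₁.length := List.length_pos_iff.2 (List.ne_nil_of_mem hxB)
        have hL₁ := step_length (J := J₁) hxB
        cases hy2 : nextUp l₂ B₂ with
        | none =>
          rw [rem_none hy2]
          refine lemK (B₁.length + J₁.length) l₁ B₁ J₁ B₂ J₂ k le_rfl h0 h2 h3 ?_ ?_
          · intro d hd
            exact h5 d hd (nextUp_none_iff.1 hy2 d hd)
          · rcases h7 with h | h
            · exact Or.inl h
            · exact Or.inr (le_of_eq h.symm)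
        | some y =>
          have hyB := nextUp_mem hy2
          have hyge := nextUp_ge hy2
          have hymin := nextUp_min hy2
          have hlB₂ : 0 < B₂.length := List.length_pos_iff.2 (List.ne_nil_of_mem hyB)
          have hnyl : ∀ u ∈ l₁, ¬ y ≤ u := by
            intro u hu hyu
            exact hA ⟨y, hy2, u, hu, hyu⟩
          have hJJ : J₂ ≠ [] → J₁ ≠ [] := by
            intro h2ne h1nil
            subst h1nil
            rw [List.drop_nil] at h3
            exact h2ne (List.sublist_nil.1 h3)
          have h5x : ∀ b ∈ B₂, (∃ v ∈ l₂, b < v) → b < x := by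
            intro b hb hbv
            obtain ⟨u, hu, hlt⟩ := h5 b hb hbv
            exact lt_of_lt_of_le hlt (hxge u hu)
          by_cases hxy : y = x
          · -- α : both write the same value x
            subst hxy
            rw [rem_step hy2, rem_step hx1]
            have hBex : B₂.erase y <+ B₁.erase y ++ J₁.take k := by
              have h' := h2.erase y
              rwa [List.erase_append_left _ hxB] at h'
            obtain ⟨k₃, hk₃, hsub₂, hJ₃⟩ := shift_pack hBex h3 h0
            refine ih (some y) (B₁.erase y ++ J₁.take 1) (J₁.drop 1)
              (some y) (B₂.erase y ++ J₂.take 1) (J₂.drop 1) k₃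
              (B₂.erase y ++ J₂.take 1) [] ?_ hk₃ (ilv_refl _) hsub₂ hJ₃
              (by intro e he; cases he) ?_ ?_ ?_
            · -- measure
              have hL₂ := step_length (J := J₂) hyB
              omega
            · intro b hb hbv
              obtain ⟨v, hv, hblt⟩ := hbv
              rw [opt_mem_some.1 hv] at hblt
              exact ⟨y, rfl, hblt⟩
            · -- length ≤
              have e1 : (B₂.erase y).length = B₂.length - 1 := by
                rw [List.length_erase_of_mem hyB]
              have e2 : (B₁.erase y).length = B₁.length - 1 := by
                rw [List.length_erase_of_mem hxB]
              cases hJ₂ : J₂ with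
              | nil => simp [e1, e2]; omega
              | cons a rest =>
                have hJ1ne : J₁ ≠ [] := hJJ (by simp [hJ₂])
                obtain ⟨j, t, rfl⟩ := List.exists_cons_of_ne_nil hJ1ne
                simp [e1, e2]
                omega
            · -- length eq or nil
              cases hJ₂ : J₂ with
              | nil => exact Or.inl (by simp)
              | cons a rest =>
                rcases h7 with h | h
                · rw [hJ₂] at h; cases h
                · have hJ1ne : J₁ ≠ [] := hJJ (by simp [hJ₂])
                  obtain ⟨j, t, rfl⟩ := List.exists_cons_of_ne_nil hJ1ne
                  refine Or.inr ?_
                  have e1 : (B₂.erase y).length = B₂.length - 1 := by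
                    rw [List.length_erase_of_mem hyB]
                  have e2 : (B₁.erase y).length = B₁.length - 1 := by
                    rw [List.length_erase_of_mem hxB]
                  simp [hJ₂, e1, e2]
                  omega
          · by_cases hxB₂ : x ∈ B₂
            · -- β : 1 writes x, 2 writes y < x, x-copy of 2 becomes excess
              have hxcand : ∀ v ∈ l₂, v ≤ x := by
                intro v hv
                by_contra hvx
                obtain ⟨u, hu, hxu⟩ := h5 x hxB₂ ⟨v, hv, not_le.1 hvx⟩
                exact absurd hxu (not_lt.2 (hxge u hu))
              have hyx : y < x := lt_of_le_of_ne (hymin x hxB₂ hxcand) hxy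
              rw [rem_step hy2, rem_step hx1]
              have hxB₂' : x ∈ B₂.erase y := (List.mem_erase_of_ne (fun h => hxy h.symm)).2 hxB₂
              have hGex : (B₂.erase y).erase x <+ B₁.erase x ++ J₁.take k := by
                rw [List.erase_comm]
                have h' := (h2.erase x).erase y
                rw [List.erase_append_left _ hxB] at h'
                exact h'.trans List.erase_sublist
              obtain ⟨k₃, hk₃, hsub₂, hJ₃⟩ := shift_pack hGex h3 h0
              refine ih (some x) (B₁.erase x ++ J₁.take 1) (J₁.drop 1)
                (some y) (B₂.erase y ++ J₂.take 1) (J₂.drop 1) k₃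
                ((B₂.erase y).erase x ++ J₂.take 1) [x] ?_ hk₃
                (ilv_append (ilv_single hxB₂') _) hsub₂ hJ₃ ?_ ?_ ?_ ?_
              · -- measure
                have hL₂ := step_length (J := J₂) hyB
                omega
              · -- h4 : the excess element x
                intro e he
                rcases List.mem_singleton.1 he with rfl
                refine ⟨?_, ⟨e, rfl, le_rfl⟩⟩
                intro v hv
                rw [opt_mem_some.1 hv]
                exact le_of_lt hyx
              · -- h5
                intro b hb hbv
                obtain ⟨v, hv, hblt⟩ := hbv
                rw [opt_mem_some.1 hv] at hblt
                exact ⟨x, rfl, lt_trans hblt hyx⟩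
              · -- length ≤
                have e1 : (B₂.erase y).length = B₂.length - 1 := by
                  rw [List.length_erase_of_mem hyB]
                have e2 : (B₁.erase x).length = B₁.length - 1 := by
                  rw [List.length_erase_of_mem hxB]
                cases hJ₂ : J₂ with
                | nil => simp [e1, e2]; omega
                | cons a rest =>
                  have hJ1ne : J₁ ≠ [] := hJJ (by simp [hJ₂])
                  obtain ⟨j, t, rfl⟩ := List.exists_cons_of_ne_nil hJ1ne
                  simp [e1, e2]
                  omega
              · -- length eq or nil
                cases hJ₂ : J₂ with
                | nil => exact Or.inl (by simp)
                | cons a rest =>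
                  rcases h7 with h | h
                  · rw [hJ₂] at h; cases h
                  · have hJ1ne : J₁ ≠ [] := hJJ (by simp [hJ₂])
                    obtain ⟨j, t, rfl⟩ := List.exists_cons_of_ne_nil hJ1ne
                    refine Or.inr ?_
                    have e1 : (B₂.erase y).length = B₂.length - 1 := by
                      rw [List.length_erase_of_mem hyB]
                    have e2 : (B₁.erase x).length = B₁.length - 1 := by
                      rw [List.length_erase_of_mem hxB]
                    simp [hJ₂, e1, e2]
                    omega
            · -- step process 1 alone
              rw [rem_step hx1]
              have h5'' : ∀ b ∈ B₂, (∃ v ∈ l₂, b < v) → ∃ u ∈ some x, b < u := by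
                intro b hb hbv
                exact ⟨x, rfl, h5x b hb hbv⟩
              cases k with
              | zero =>
                have hB₂B₁ : B₂ <+ B₁ := by simpa using h2
                have hJ₂nil : J₂ = [] := by
                  rcases h7 with h | h
                  · exact h
                  · exfalso
                    have hbe := hB₂B₁.eq_of_length h
                    rw [hbe] at hxB₂
                    exact hxB₂ hxB
                subst hJ₂nil
                have hBe : B₂ <+ B₁.erase x := sub_erase_not_mem hB₂B₁ hxB₂
                refine ih (some x) (B₁.erase x ++ J₁.take 1) (J₁.drop 1) l₂ B₂ [] 0
                  B₂ [] ?_ (by simp) (ilv_refl _) ?_ (List.nil_sublist _)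
                  (by intro e he; cases he) h5'' ?_ (Or.inl rfl)
                · omega
                · simpa using hBe.trans (List.sublist_append_left _ _)
                · calc B₂.length ≤ (B₁.erase x).length := hBe.length_le
                    _ ≤ (B₁.erase x ++ J₁.take 1).length := by simp
              | succ k₀ =>
                have hJne : J₁ ≠ [] := by
                  intro h
                  subst h
                  simp at h0
                obtain ⟨j, t, rfl⟩ := List.exists_cons_of_ne_nil hJne
                have hB₂' : B₂ <+ (B₁.erase x ++ (j :: t).take 1) ++ t.take k₀ := by
                  have h' := sub_erase_not_mem h2 hxB₂
                  rw [List.erase_append_left _ hxB] at h'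
                  simpa [List.take_succ_cons] using h'
                refine ih (some x) (B₁.erase x ++ (j :: t).take 1) ((j :: t).drop 1) l₂ B₂ J₂ k₀
                  B₂ [] ?_ ?_ (ilv_refl _) hB₂' ?_
                  (by intro e he; cases he) h5'' ?_ ?_
                · omega
                · simpa using h0
                · simpa using h3
                · have e2 : (B₁.erase x).length = B₁.length - 1 := by
                    rw [List.length_erase_of_mem hxB]
                  simp [e2]
                  omega
                · rcases h7 with h | h
                  · exact Or.inl h
                  · refine Or.inr ?_
                    have e2 : (B₁.erase x).length = B₁.length - 1 := by
                      rw [List.length_erase_of_mem hxB]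
                    simp [e2]
                    omega

lemma top (M : ℕ) {I₁ I₂ : List β} (h : I₂ <+ I₁) :
    remFrom none (I₂.take M) (I₂.drop M) <+ remFrom none (I₁.take M) (I₁.drop M) := by
  have h' : I₂.take M ++ I₂.drop M <+ I₁ := by rw [List.take_append_drop]; exact h
  obtain ⟨r₁, r₂, hI, hB, hJ⟩ := List.append_sublist_iff.1 h'
  have hr₁ : I₁.take r₁.length = r₁ := by rw [hI, List.take_left]
  have hr₂ : I₁.drop r₁.length = r₂ := by rw [hI, List.drop_left]
  have hlen : r₁.length ≤ I₁.length := by rw [hI]; simp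
  have hlen2 : I₂.length ≤ I₁.length := h.length_le
  have hBlen : (I₂.take M).length ≤ (I₁.take M).length := by
    simp only [List.length_take]
    omega
  have hnovac : ∀ e ∈ ([] : List β), (∀ v ∈ (none : Option β), v ≤ e) ∧
      ∃ u ∈ (none : Option β), e ≤ u := by intro e he; cases he
  have hnovac2 : ∀ b ∈ I₂.take M, (∃ v ∈ (none : Option β), b < v) →
      ∃ u ∈ (none : Option β), b < u := by
    rintro b hb ⟨v, hv, -⟩
    cases hv
  by_cases hMm : M ≤ r₁.length
  · refine main ((I₁.take M).length + (I₁.drop M).length + (I₂.take M).length +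
      (I₂.drop M).length) none (I₁.take M) (I₁.drop M) none (I₂.take M) (I₂.drop M)
      (r₁.length - M) (I₂.take M) [] le_rfl ?_ (ilv_refl _) ?_ ?_ hnovac hnovac2 hBlen ?_
    · simp only [List.length_drop]
      omega
    · rw [← List.take_add, show M + (r₁.length - M) = r₁.length by omega, hr₁]
      exact hB
    · rw [List.drop_drop, show M + (r₁.length - M) = r₁.length by omega, hr₂]
      exact hJ
    · by_cases hM : I₂.length ≤ M
      · exact Or.inl (List.drop_eq_nil_of_le hM)
      · push_neg at hM
        right
        simp only [List.length_take]
        omega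
  · push_neg at hMm
    have hI₂ : I₂.length < M := by
      have hbl := hB.length_le
      simp only [List.length_take] at hbl
      omega
    refine main ((I₁.take M).length + (I₁.drop M).length + (I₂.take M).length +
      (I₂.drop M).length) none (I₁.take M) (I₁.drop M) none (I₂.take M) (I₂.drop M)
      0 (I₂.take M) [] le_rfl (Nat.zero_le _) (ilv_refl _) ?_ ?_ hnovac hnovac2 hBlen
      (Or.inl (List.drop_eq_nil_of_le (le_of_lt hI₂)))
    · simp only [List.take_zero, List.append_nil]
      refine (hB.trans ?_)
      rw [← hr₁]
      have htt : I₁.take r₁.length = (I₁.take M).take r₁.length := by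
        rw [List.take_take, min_eq_left (le_of_lt hMm)]
      rw [htt]
      exact List.take_sublist _ _
    · rw [List.drop_eq_nil_of_le (le_of_lt hI₂)]
      exact List.nil_sublist _

end Aux

section Dual
variable {α : Type*} [LinearOrder α]

lemma erase_dual (B : List α) (x : α) :
    List.erase (α := αᵒᵈ) B x = List.erase (α := α) B x := by
  induction B with
  | nil => rfl
  | cons b B ih =>
    by_cases hbx : b = x <;>
      simp [List.erase_cons, hbx, ih]
    · exact List.erase_cons_head (α := αᵒᵈ) ..
    · exact List.erase_cons_tail (α := αᵒᵈ) (by exact fun h => hbx (of_decide_eq_true h))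

lemma nextDown_dual (l? : Option α) (B : List α) :
    nextDown l? B = nextUp (α := αᵒᵈ) l? B := by
  cases l? with
  | none => rfl
  | some l =>
    show (B.filter fun x => decide (x ≤ l)).max? = _
    have hf : (B.filter fun x => decide (x ≤ l)) =
        (B.filter fun x : αᵒᵈ => decide ((OrderDual.toDual l) ≤ x)) := by
      apply List.filter_congr
      intro x _
      exact decide_eq_decide.2 Iff.rfl
    rw [hf]
    rfl

lemma decAux_dual : ∀ (f : ℕ) (l? : Option α) (B J : List α),
    decAux f l? B J = incAux (α := αᵒᵈ) f l? B J := by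
  intro f
  induction f with
  | zero => intro l? B J; rfl
  | succ f ih =>
    intro l? B J
    have hnd := nextDown_dual (α := α) l? B
    cases h : nextDown l? B with
    | none =>
      refine Eq.trans ?_ (Aux.incAux_none (β := αᵒᵈ) (f := f + 1) (l? := l?) (B := B) (J := J) (by exact hnd.symm.trans h)).symm
      simp [decAux, h]
      rfl
    | some x =>
      refine Eq.trans ?_ (Aux.incAux_some (β := αᵒᵈ) (f := f) (l? := l?) (B := B) (J := J) (x := x) (by exact hnd.symm.trans h)).symm
      simp only [decAux, h]
      rw [erase_dual, ih]
      exact Prod.ext rfl (Prod.ext rfl rfl)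

end Dual

end RunGen


open RunGen

/-- If `I₂` is a subsequence of `I₁` and both initial maximal runs are taken in the same
direction (both increasing, or both decreasing), then the unwritten-element sequence of
`I₂` after its first maximal run is a subsequence of that of `I₁`. -/
theorem stmt_5 {α : Type*} [LinearOrder α] (M : ℕ) (I₁ I₂ : List α)
    (hsub : I₂.Sublist I₁) :
    (((incState (I₂.take M) (I₂.drop M)).1 ++ (incState (I₂.take M) (I₂.drop M)).2).Sublist
      ((incState (I₁.take M) (I₁.drop M)).1 ++ (incState (I₁.take M) (I₁.drop M)).2)) ∧
    (((decState (I₂.take M) (I₂.drop M)).1 ++ (decState (I₂.take M) (I₂.drop M)).2).Sublist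
      ((decState (I₁.take M) (I₁.drop M)).1 ++ (decState (I₁.take M) (I₁.drop M)).2)) := by
  constructor
  · exact RunGen.Aux.top M hsub
  · have h := RunGen.Aux.top (β := αᵒᵈ) M (show List.Sublist (α := αᵒᵈ) I₂ I₁ from hsub)
    have e₂ := RunGen.decAux_dual ((I₂.take M).length + (I₂.drop M).length) none
      (I₂.take M) (I₂.drop M)
    have e₁ := RunGen.decAux_dual ((I₁.take M).length + (I₁.drop M).length) none
      (I₁.take M) (I₁.drop M)
    simp only [RunGen.decState]
    rw [e₂, e₁]
    exact h

-- axiom check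
end
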